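/- arXiv:2504.14916 — 3 statements merged into one kernel-verified Lean document; each statement's English description precedes it below -/
import Mathlib

section
/- For every even integer n ≥ 4, the Sombor characteristic polynomial of the order super commuting graph Δ^o(D_{2n}) of the dihedral group D_{2n} equals (x + (2n−1)·√2)^{2n−1} · (x − (2n−1)²·√2); equivalently, the Sombor spectrum of Δ^o(D_{2n}) consists of −(2n−1)·√2 with multiplicity 2n−1 and (2n−1)²·√2 with multiplicity 1. -/
open Polynomial
open scoped Classical

/-- Degree of a vertex. -/
noncomputable def sdeg {V : Type*} (G : SimpleGraph V) (v : V) : ℕ := {u | G.Adj v u}.ncard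

/-- Sombor matrix of a graph. -/
noncomputable def somborMatrix {V : Type*} (G : SimpleGraph V) : Matrix V V ℝ :=
  Matrix.of fun u v =>
    if G.Adj u v then Real.sqrt ((sdeg G u : ℝ) ^ 2 + (sdeg G v : ℝ) ^ 2) else 0

/-- Sombor characteristic polynomial det(x·I − S(Γ)). -/
noncomputable def somborCharpoly {V : Type*} [Fintype V] [DecidableEq V] (G : SimpleGraph V) :
    Polynomial ℝ :=
  (somborMatrix G).charpoly

noncomputable def rt2 : ℝ := Real.sqrt 2

/-- The `R`-super `Γ` graph. -/
def superGraph {V : Type*} (A : SimpleGraph V) (r : V → V → Prop) (hr : Equivalence r) :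
    SimpleGraph V where
  Adj x y := x ≠ y ∧ (r x y ∨ ∃ x' y', r x x' ∧ r y y' ∧ A.Adj x' y')
  symm := by
    refine ⟨?_⟩
    rintro x y ⟨hxy, h | ⟨x', y', hx, hy, hadj⟩⟩
    · exact ⟨hxy.symm, Or.inl (hr.symm h)⟩
    · exact ⟨hxy.symm, Or.inr ⟨y', x', hy, hx, hadj.symm⟩⟩
  loopless := by refine ⟨?_⟩; rintro x ⟨h, -⟩; exact h rfl

/-- Same-order relation. -/
def orderRel (G : Type*) [Monoid G] : G → G → Prop := fun x y => orderOf x = orderOf y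

theorem orderRel_equivalence (G : Type*) [Monoid G] : Equivalence (orderRel G) :=
  ⟨fun _ => rfl, fun h => h.symm, fun h1 h2 => h1.trans h2⟩

/-- Conjugacy relation. -/
def conjRel (G : Type*) [Group G] : G → G → Prop := fun x y => ∃ a : G, x = a * y * a⁻¹

theorem conjRel_equivalence (G : Type*) [Group G] : Equivalence (conjRel G) := by
  constructor
  · intro x; exact ⟨1, by simp⟩
  · rintro x y ⟨a, rfl⟩; exact ⟨a⁻¹, by group⟩
  · rintro x y z ⟨a, rfl⟩ ⟨b, rfl⟩; exact ⟨a * b, by group⟩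

/-- Commuting graph. -/
def commutingGraph (G : Type*) [Group G] : SimpleGraph G where
  Adj x y := x ≠ y ∧ x * y = y * x
  symm := by refine ⟨?_⟩; rintro x y ⟨h, c⟩; exact ⟨h.symm, c.symm⟩
  loopless := by refine ⟨?_⟩; rintro x ⟨h, -⟩; exact h rfl

/-- Power graph. -/
def powerGraph (G : Type*) [Group G] : SimpleGraph G where
  Adj x y := x ≠ y ∧ (x ∈ Subgroup.zpowers y ∨ y ∈ Subgroup.zpowers x)
  symm := by refine ⟨?_⟩; rintro x y ⟨h, c⟩; exact ⟨h.symm, c.symm⟩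
  loopless := by refine ⟨?_⟩; rintro x ⟨h, -⟩; exact h rfl

/-- Enhanced power graph. -/
def enhancedPowerGraph (G : Type*) [Group G] : SimpleGraph G where
  Adj x y := x ≠ y ∧ ∃ z : G, x ∈ Subgroup.zpowers z ∧ y ∈ Subgroup.zpowers z
  symm := by refine ⟨?_⟩; rintro x y ⟨h, z, hx, hy⟩; exact ⟨h.symm, z, hy, hx⟩
  loopless := by refine ⟨?_⟩; rintro x ⟨h, -⟩; exact h rfl


lemma sdeg_top {V : Type*} [Fintype V] (v : V) :
    sdeg (⊤ : SimpleGraph V) v = Fintype.card V - 1 := by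
  have h : {u | (⊤ : SimpleGraph V).Adj v u} = ({v}ᶜ : Set V) := by
    ext u; simp [ne_comm, eq_comm]
  rw [sdeg, h, Set.ncard_eq_toFinset_card']
  simp [Finset.card_compl]


open Matrix in
lemma sombor_top {V : Type*} [Fintype V] [DecidableEq V] (hV : 2 ≤ Fintype.card V) :
    somborCharpoly (⊤ : SimpleGraph V) =
      (X + C (((Fintype.card V : ℝ) - 1) * rt2)) ^ (Fintype.card V - 1) *
        (X - C (((Fintype.card V : ℝ) - 1) ^ 2 * rt2)) := by
  obtain ⟨k, hk⟩ : ∃ k, Fintype.card V = k + 1 := ⟨Fintype.card V - 1, by omega⟩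
  set d : ℝ := (Fintype.card V : ℝ) - 1 with hd
  have hdk : (k : ℝ) = d := by rw [hd, hk]; push_cast; ring
  have hd0 : 0 ≤ d := by rw [← hdk]; positivity
  set c : ℝ := d * rt2 with hc
  set M : Matrix V V ℝ := somborMatrix (⊤ : SimpleGraph V) with hM
  have hMe : ∀ u v : V, M u v = if u ≠ v then c else 0 := by
    intro u v
    rw [hM, somborMatrix]
    simp only [Matrix.of_apply, SimpleGraph.top_adj, sdeg_top]
    have hcast : ((Fintype.card V - 1 : ℕ) : ℝ) = d := by
      rw [hd]; push_cast [Nat.cast_sub (by omega : 1 ≤ Fintype.card V)]; ring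
    rw [hcast]
    congr 1
    have h2 : d ^ 2 + d ^ 2 = 2 * d ^ 2 := by ring
    rw [hc, rt2, h2, Real.sqrt_mul (by norm_num : (0:ℝ) ≤ 2), Real.sqrt_sq hd0, mul_comm]
  rw [somborCharpoly, ← hM]
  apply Polynomial.eq_of_infinite_eval_eq
  refine ((Set.finite_singleton (-c)).infinite_compl).mono ?_
  intro x hx
  have hxc : x + c ≠ 0 := fun h => hx (by simp only [Set.mem_singleton_iff]; linarith)
  have det1 : eval x M.charpoly = ((evalRingHom x).mapMatrix M.charmatrix).det := by
    rw [Matrix.charpoly]; exact RingHom.map_det (evalRingHom x) M.charmatrix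
  set u : V → ℝ := fun _ => -c / (x + c) with hu
  have hmap : (evalRingHom x).mapMatrix M.charmatrix
      = (x + c) • (1 + Matrix.replicateCol Unit u * Matrix.replicateRow Unit (fun _ => (1:ℝ))) := by
    ext i j
    by_cases h : i = j
    · subst h
      have h0 : M i i = 0 := by rw [hMe]; simp
      simp only [RingHom.mapMatrix_apply, Matrix.map_apply, Matrix.charmatrix_apply_eq,
        coe_evalRingHom, eval_sub, eval_X, eval_C, h0, sub_zero, Matrix.smul_apply,
        Matrix.add_apply, Matrix.one_apply_eq, Matrix.mul_apply, Matrix.replicateCol_apply,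
        Matrix.replicateRow_apply, mul_one, Finset.sum_const, Finset.card_univ, Fintype.card_unit,
        one_smul, smul_eq_mul, hu]
      field_simp
      ring
    · have h0 : M i j = c := by rw [hMe]; simp [h]
      simp only [RingHom.mapMatrix_apply, Matrix.map_apply, Matrix.charmatrix_apply_ne _ _ _ h,
        coe_evalRingHom, eval_neg, eval_C, h0, Matrix.smul_apply, Matrix.add_apply,
        Matrix.one_apply_ne h, Matrix.mul_apply, Matrix.replicateCol_apply, Matrix.replicateRow_apply, mul_one,
        Finset.sum_const, Finset.card_univ, Fintype.card_unit, one_smul, smul_eq_mul, hu,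
        zero_add]
      field_simp
  have hmem : eval x M.charpoly = eval x ((X + C (d * rt2)) ^ (Fintype.card V - 1) *
      (X - C (d ^ 2 * rt2))) := by
    rw [det1, hmap, Matrix.det_smul, Matrix.det_one_add_replicateCol_mul_replicateRow]
    have hdot : dotProduct (fun _ => (1:ℝ)) u = (Fintype.card V : ℝ) * (-c / (x + c)) := by
      rw [hu]
      simp only [dotProduct, one_mul, Finset.sum_const, Finset.card_univ, nsmul_eq_mul]
    rw [hdot]
    simp only [eval_mul, eval_pow, eval_add, eval_sub, eval_X, eval_C, smul_eq_mul]
    have key : ∀ (a b : ℝ) (m : ℕ), a + b ≠ 0 →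
        (a + b) ^ m * (a + b) * (1 + ((m : ℝ) + 1) * (-b / (a + b))) =
          (a + b) ^ m * (a - (m : ℝ) * b) := by
      intro a b m hab
      field_simp
      ring
    have hcard : ((Fintype.card V : ℕ) : ℝ) = (k : ℝ) + 1 := by rw [hk]; push_cast; ring
    have hdc2 : d ^ 2 * rt2 = (k : ℝ) * c := by rw [hc, ← hdk]; ring
    rw [hcard, hdc2, ← hc, hk, Nat.add_sub_cancel, pow_succ]
    exact key x c k hxc
  exact hmem

open DihedralGroup in
lemma super_eq_top (n : ℕ) [NeZero n] (hn : 4 ≤ n) (heven : Even n) :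
    superGraph (commutingGraph (DihedralGroup n)) (orderRel (DihedralGroup n))
      (orderRel_equivalence (DihedralGroup n)) = ⊤ := by
  obtain ⟨m, hm⟩ := heven
  have hhalf : n / 2 + n / 2 = n := by omega
  set z : DihedralGroup n := r ((n / 2 : ℕ) : ZMod n) with hz
  have hsum : ((n / 2 : ℕ) : ZMod n) + ((n / 2 : ℕ) : ZMod n) = 0 := by
    rw [← Nat.cast_add, hhalf, ZMod.natCast_self]
  have hne : ((n / 2 : ℕ) : ZMod n) ≠ 0 := by
    rw [Ne, ZMod.natCast_eq_zero_iff]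
    intro h
    have h1 := Nat.le_of_dvd (by omega) h
    omega
  have hz2 : orderOf z = 2 := by
    refine orderOf_eq_prime ?_ ?_
    · rw [hz, sq, r_mul_r, hsum]; rfl
    · rw [hz, one_def]; intro h; exact hne (DihedralGroup.r.inj h)
  have hzcomm : ∀ g : DihedralGroup n, z * g = g * z := by
    intro g
    have hneg : ((n / 2 : ℕ) : ZMod n) = -((n / 2 : ℕ) : ZMod n) := by
      rw [eq_neg_iff_add_eq_zero]; exact hsum
    cases g with
    | r j => rw [hz, r_mul_r, r_mul_r, add_comm]
    | sr j => rw [hz, r_mul_sr, sr_mul_r, sub_eq_add_neg, ← hneg]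
  ext x y
  simp only [SimpleGraph.top_adj]
  constructor
  · rintro ⟨h, -⟩; exact h
  · intro hxy
    refine ⟨hxy, ?_⟩
    cases x with
    | r i => cases y with
      | r j =>
        exact Or.inr ⟨r i, r j, rfl, rfl, hxy, by rw [r_mul_r, r_mul_r, add_comm]⟩
      | sr j =>
        by_cases h2 : orderOf (r i : DihedralGroup n) = 2
        · exact Or.inl (show orderOf _ = orderOf _ by rw [h2, orderOf_sr])
        · refine Or.inr ⟨r i, z, rfl,
            (show orderOf _ = orderOf _ by rw [orderOf_sr, hz2]), ?_, (hzcomm (r i)).symm⟩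
          exact fun h => h2 (by rw [h, hz2])
    | sr i => cases y with
      | r j =>
        by_cases h2 : orderOf (r j : DihedralGroup n) = 2
        · exact Or.inl (show orderOf _ = orderOf _ by rw [orderOf_sr, h2])
        · refine Or.inr ⟨z, r j,
            (show orderOf _ = orderOf _ by rw [orderOf_sr, hz2]), rfl, ?_, hzcomm (r j)⟩
          exact fun h => h2 (by rw [← h]; exact hz2)
      | sr j =>
        exact Or.inl (show orderOf _ = orderOf _ by rw [orderOf_sr, orderOf_sr])

theorem stmt7 (n : ℕ) [NeZero n] (hn : 4 ≤ n) (heven : Even n) :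
    somborCharpoly (superGraph (commutingGraph (DihedralGroup n))
        (orderRel (DihedralGroup n)) (orderRel_equivalence (DihedralGroup n))) =
      (X + C ((2 * (n : ℝ) - 1) * rt2)) ^ (2 * n - 1) *
        (X - C ((2 * (n : ℝ) - 1) ^ 2 * rt2)) := by
  rw [super_eq_top n hn heven,
    sombor_top (by rw [DihedralGroup.card]; omega), DihedralGroup.card]
  have h1 : ((2 * n : ℕ) : ℝ) - 1 = 2 * (n : ℝ) - 1 := by push_cast; ring
  rw [h1]
end

section
/- For every odd integer n ≥ 3, the Sombor characteristic polynomial of the conjugacy super commuting graph Δ^c(Q_{4n}) of the generalized quaternion group Q_{4n} equals (x + (4n−1)·√2) · (x + (2n−1)·√2)^{2n−3} · (x + (2n+1)·√2)^{2n−1} · [ (x − (4n−1)·√2)·(x − (2n−1)(2n−3)·√2)·(x − (2n−1)(2n+1)·√2) − 8(n−1)(10n² − 6n + 1)·(x − (2n−1)(2n+1)·√2) − 8n(10n² − 2n + 1)·(x − (2n−1)(2n−3)·√2) ]. -/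
open Polynomial
open scoped Classical

/- ===== auxiliary development ===== -/

namespace SomborAux

open QuaternionGroup

variable {n : ℕ}

instance auxNeZero [NeZero n] : NeZero (2 * n) := ⟨by have := NeZero.pos n; omega⟩

lemma zmod_self_cast [NeZero n] (c : ZMod (2*n)) : c = ((c.val : ℕ) : ZMod (2*n)) := by
  rw [ZMod.natCast_val, ZMod.cast_id]

lemma two_mul_zmod_iff [NeZero n] (c : ZMod (2*n)) : 2 * c = 0 ↔ c = 0 ∨ c = (n : ZMod (2*n)) := by
  constructor
  · intro h
    have hc : ((2 * c.val : ℕ) : ZMod (2*n)) = 0 := by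
      push_cast [ZMod.natCast_val, ZMod.cast_id]; exact h
    rw [ZMod.natCast_eq_zero_iff] at hc
    have hlt := ZMod.val_lt c
    obtain ⟨k, hk⟩ := hc
    have : c.val = 0 ∨ c.val = n := by
      rcases Nat.lt_or_ge k 2 with hk2 | hk2
      · interval_cases k <;> omega
      · nlinarith
    rcases this with h1 | h1
    · left; rw [zmod_self_cast c, h1]; simp
    · right; rw [zmod_self_cast c, h1]
  · rintro (rfl | rfl)
    · simp
    · have : ((2 * n : ℕ) : ZMod (2*n)) = 0 := ZMod.natCast_self _
      push_cast at this ⊢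
      linear_combination this

lemma n_ne_zero_zmod [NeZero n] (hn : 3 ≤ n) : (n : ZMod (2*n)) ≠ 0 := by
  intro h
  rw [ZMod.natCast_eq_zero_iff] at h
  obtain ⟨k, hk⟩ := h
  rcases Nat.lt_or_ge k 1 with hk2 | hk2 <;> nlinarith

lemma two_n_zero_zmod : ((2*n : ℕ) : ZMod (2*n)) = 0 := ZMod.natCast_self _

-- commutation lemmas
lemma comm_a_xa (i j : ZMod (2*n)) :
    (a i : QuaternionGroup n) * xa j = xa j * a i ↔ 2 * i = 0 := by
  rw [a_mul_xa, xa_mul_a, xa.injEq]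
  constructor <;> intro h <;> linear_combination -h

lemma comm_xa_xa [NeZero n] (i j : ZMod (2*n)) :
    (xa i : QuaternionGroup n) * xa j = xa j * xa i ↔ j = i ∨ j = i + n := by
  rw [xa_mul_xa, xa_mul_xa, a.injEq]
  rw [show ((n : ZMod (2*n)) + j - i = n + i - j ↔ 2*(j-i) = 0) from by
    constructor <;> intro h <;> linear_combination h]
  rw [two_mul_zmod_iff]
  constructor <;> rintro (h | h)
  · left; linear_combination h
  · right; linear_combination h
  · left; linear_combination h
  · right; linear_combination h

lemma central_a (i : ZMod (2*n)) (h : i = 0 ∨ i = (n : ZMod (2*n))) (g : QuaternionGroup n) :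
    a i * g = g * a i := by
  have h2 : 2 * i = 0 := by
    rcases h with rfl | rfl
    · simp
    · have := two_n_zero_zmod (n := n)
      push_cast at this ⊢
      linear_combination this
  rcases g with j | j
  · rw [a_mul_a, a_mul_a, add_comm]
  · rw [a_mul_xa, xa_mul_a, xa.injEq]
    linear_combination -h2

/-- classification of conjugates -/
lemma conj_a_cases (g : QuaternionGroup n) (j : ZMod (2*n)) :
    g * a j * g⁻¹ = a j ∨ g * a j * g⁻¹ = a (-j) := by
  rcases g with i | i
  · left
    show a i * a j * a (-i) = a j
    rw [a_mul_a, a_mul_a, a.injEq]; ring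
  · right
    show xa i * a j * xa ((n : ZMod (2*n)) + i) = a (-j)
    rw [xa_mul_a, xa_mul_xa, a.injEq]
    have := two_n_zero_zmod (n := n)
    push_cast at this
    linear_combination this

lemma conj_xa_cases (g : QuaternionGroup n) (j : ZMod (2*n)) :
    ∃ m : ZMod (2*n), g * xa j * g⁻¹ = xa (j + 2*m) := by
  rcases g with i | i
  · exact ⟨-i, by
      show a i * xa j * a (-i) = _
      rw [a_mul_xa, xa_mul_a, xa.injEq]; ring⟩
  · exact ⟨i - j, by
      show xa i * xa j * xa ((n : ZMod (2*n)) + i) = _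
      rw [xa_mul_xa, a_mul_xa, xa.injEq]; ring⟩

lemma conj_xa_mem (j m : ZMod (2*n)) :
    conjRel (QuaternionGroup n) (xa (j + 2*m)) (xa j) := by
  refine ⟨a (-m), ?_⟩
  show xa (j + 2*m) = a (-m) * xa j * a (-(-m))
  rw [neg_neg, a_mul_xa, xa_mul_a, xa.injEq]; ring

end SomborAux
namespace SomborAux
open QuaternionGroup
variable {n : ℕ}

/-- type of a vertex: 0 = central, 1 = noncentral rotation, 2 = reflection -/
def kk : QuaternionGroup n → Fin 3
  | .a i => if i = 0 ∨ i = (n : ZMod (2*n)) then 0 else 1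
  | .xa _ => 2

lemma neg_n_eq : -(n : ZMod (2*n)) = (n : ZMod (2*n)) := by
  have := two_n_zero_zmod (n := n)
  push_cast at this
  linear_combination (-1 : ZMod (2*n)) * this

lemma kk_a_neg (j : ZMod (2*n)) : kk (a (-j) : QuaternionGroup n) = kk (a j) := by
  have hiff : (-j = 0 ∨ -j = (n : ZMod (2*n))) ↔ (j = 0 ∨ j = (n : ZMod (2*n))) := by
    rw [neg_eq_zero]
    constructor <;> rintro (h | h)
    · left; exact h
    · right; rw [← neg_n_eq, ← h, neg_neg]
    · left; exact h
    · right; rw [h, neg_n_eq]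
  simp only [kk, hiff]

lemma kk_conj {x y : QuaternionGroup n} (h : conjRel (QuaternionGroup n) x y) :
    kk x = kk y := by
  obtain ⟨g, rfl⟩ := h
  rcases y with j | j
  · rcases conj_a_cases g j with h | h <;> rw [h]
    exact kk_a_neg j
  · obtain ⟨m, h⟩ := conj_xa_cases g j
    rw [h]; rfl

/-- reduction mod 2 -/
def par : ZMod (2*n) →+* ZMod 2 := ZMod.castHom (Dvd.intro n rfl) (ZMod 2)

lemma exists_of_par_zero [NeZero n] (c : ZMod (2*n)) (h : par c = 0) : ∃ m, c = 2*m := by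
  have hc : ((c.val : ℕ) : ZMod 2) = 0 := by
    rw [← h, zmod_self_cast c, map_natCast]
    rw [← zmod_self_cast c]
  rw [ZMod.natCast_eq_zero_iff] at hc
  obtain ⟨t, ht⟩ := hc
  exact ⟨(t : ZMod (2*n)), by rw [zmod_self_cast c, ht]; push_cast; ring⟩

lemma par_n (hodd : Odd n) : par ((n : ℕ) : ZMod (2*n)) = 1 := by
  rw [map_natCast]
  obtain ⟨t, rfl⟩ := hodd
  push_cast
  have : (2 : ZMod 2) = 0 := by decide
  rw [this]; ring

end SomborAux
namespace SomborAux
open QuaternionGroup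
variable {n : ℕ}

lemma kk_xa (j : ZMod (2*n)) : kk (xa j : QuaternionGroup n) = 2 := rfl

lemma kk_a_eq_one {i : ZMod (2*n)} (h : ¬(i = 0 ∨ i = (n : ZMod (2*n)))) :
    kk (a i : QuaternionGroup n) = 1 := by simp only [kk, if_neg h]

lemma kk_a_eq_zero {i : ZMod (2*n)} (h : i = 0 ∨ i = (n : ZMod (2*n))) :
    kk (a i : QuaternionGroup n) = 0 := by simp only [kk, if_pos h]

lemma kk_a_cond {i : ZMod (2*n)} (h : kk (a i : QuaternionGroup n) ≠ 0) :
    ¬(i = 0 ∨ i = (n : ZMod (2*n))) := fun hc => h (kk_a_eq_zero hc)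

lemma adj_iff [NeZero n] (hn : 3 ≤ n) (hodd : Odd n) (x y : QuaternionGroup n) :
    (superGraph (commutingGraph (QuaternionGroup n)) (conjRel (QuaternionGroup n))
      (conjRel_equivalence (QuaternionGroup n))).Adj x y ↔
    x ≠ y ∧ (kk x = kk y ∨ kk x = 0 ∨ kk y = 0) := by
  constructor
  · rintro ⟨hxy, hc⟩
    refine ⟨hxy, ?_⟩
    by_contra hk
    push_neg at hk
    obtain ⟨hne, h0x, h0y⟩ := hk
    rcases hc with h | ⟨x', y', hx', hy', hne', hcomm⟩
    · exact hne (kk_conj h)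
    · have ex : kk x' = kk x := (kk_conj hx').symm
      have ey : kk y' = kk y := (kk_conj hy').symm
      rcases x' with i | i <;> rcases y' with j | j
      · -- both rotations
        have h1 : kk (a i : QuaternionGroup n) = 1 := by
          by_cases hcd : (i = 0 ∨ i = (n : ZMod (2*n)))
          · exact absurd (ex.symm.trans (kk_a_eq_zero hcd)) h0x
          · exact kk_a_eq_one hcd
        have h2 : kk (a j : QuaternionGroup n) = 1 := by
          by_cases hcd : (j = 0 ∨ j = (n : ZMod (2*n)))
          · exact absurd (ey.symm.trans (kk_a_eq_zero hcd)) h0y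
          · exact kk_a_eq_one hcd
        exact hne (by rw [← ex, ← ey, h1, h2])
      · -- rotation & reflection commuting: impossible
        have h2i := (comm_a_xa i j).mp hcomm
        have := kk_a_cond (ex.symm ▸ h0x : kk (a i : QuaternionGroup n) ≠ 0)
        exact this ((two_mul_zmod_iff i).mp h2i)
      · have h2j := (comm_a_xa j i).mp hcomm.symm
        have := kk_a_cond (ey.symm ▸ h0y : kk (a j : QuaternionGroup n) ≠ 0)
        exact this ((two_mul_zmod_iff j).mp h2j)
      · exact hne (ex.symm.trans ey)
  · rintro ⟨hxy, h⟩
    refine ⟨hxy, ?_⟩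
    have hrefl := (conjRel_equivalence (QuaternionGroup n)).refl
    rcases h with h | h | h
    rotate_left
    · -- x central
      rcases x with i | i
      · have hcond : i = 0 ∨ i = (n : ZMod (2*n)) := by
          by_contra hc; rw [kk_a_eq_one hc] at h; exact absurd h (by decide)
        exact Or.inr ⟨_, _, hrefl _, hrefl _, hxy, central_a i hcond y⟩
      · rw [kk_xa] at h; exact absurd h (by decide)
    · -- y central
      rcases y with j | j
      · have hcond : j = 0 ∨ j = (n : ZMod (2*n)) := by
          by_contra hc; rw [kk_a_eq_one hc] at h; exact absurd h (by decide)
        exact Or.inr ⟨_, _, hrefl _, hrefl _, hxy, (central_a j hcond x).symm⟩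
      · rw [kk_xa] at h; exact absurd h (by decide)
    · -- same type
      rcases x with i | i <;> rcases y with j | j
      · exact Or.inr ⟨_, _, hrefl _, hrefl _, hxy, by rw [a_mul_a, a_mul_a, add_comm]⟩
      · exfalso
        rw [kk_xa] at h
        simp only [kk] at h
        split_ifs at h <;> exact absurd h (by decide)
      · exfalso
        rw [kk_xa] at h
        simp only [kk] at h
        split_ifs at h <;> exact absurd h (by decide)
      · -- both reflections
        by_cases hpar : par (j - i) = 0
        · obtain ⟨m, hm⟩ := exists_of_par_zero _ hpar
          left
          have := conj_xa_mem j (-m)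
          have hi : j + 2 * (-m) = i := by linear_combination hm
          rwa [hi] at this
        · have h2 : ∀ c : ZMod 2, c = 0 ∨ c = 1 := by decide
          have hpar1 : par (j - i) = 1 := (h2 _).resolve_left hpar
          right
          refine ⟨xa i, xa (i + (n : ZMod (2*n))), hrefl _, ?_, ?_, ?_⟩
          · -- conjRel (xa j) (xa (i+n))
            have hp0 : par (j - (i + (n : ZMod (2*n)))) = 0 := by
              rw [map_sub, map_add, par_n hodd]
              rw [map_sub] at hpar1
              linear_combination hpar1
            obtain ⟨m, hm⟩ := exists_of_par_zero _ hp0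
            have := conj_xa_mem (i + (n : ZMod (2*n))) m
            have hj : i + (n : ZMod (2*n)) + 2 * m = j := by linear_combination -hm
            rwa [hj] at this
          · intro hc
            rw [xa.injEq] at hc
            exact n_ne_zero_zmod hn (by linear_combination -hc)
          · rw [comm_xa_xa]
            right; rfl
end SomborAux
namespace SomborAux
open QuaternionGroup Finset
variable {n : ℕ}

/-- our graph -/
abbrev Γq (n : ℕ) : SimpleGraph (QuaternionGroup n) :=
  superGraph (commutingGraph (QuaternionGroup n)) (conjRel (QuaternionGroup n))
    (conjRel_equivalence (QuaternionGroup n))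

lemma a_inj : Function.Injective (QuaternionGroup.a (n := n)) :=
  fun x y h => by injection h

lemma xa_inj : Function.Injective (QuaternionGroup.xa (n := n)) :=
  fun x y h => by injection h

lemma card_fiber2 [NeZero n] :
    (Finset.univ.filter fun u : QuaternionGroup n => kk u = 2).card = 2*n := by
  have : (Finset.univ.filter fun u : QuaternionGroup n => kk u = 2) =
      Finset.univ.image QuaternionGroup.xa := by
    ext u
    rcases u with i | i
    · simp only [mem_filter, mem_univ, true_and, mem_image]; simp only [kk]
      constructor
      · intro h; split_ifs at h <;> exact absurd h (by decide)
      · rintro ⟨j, hj⟩; exact absurd hj (by simp)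
    · simp only [mem_filter, mem_univ, true_and, mem_image]; simp only [kk]
      exact ⟨fun _ => ⟨i, rfl⟩, fun _ => trivial⟩
  rw [this, Finset.card_image_of_injective _ xa_inj, Finset.card_univ, ZMod.card]

lemma card_fiber0 [NeZero n] (hn : 3 ≤ n) :
    (Finset.univ.filter fun u : QuaternionGroup n => kk u = 0).card = 2 := by
  have : (Finset.univ.filter fun u : QuaternionGroup n => kk u = 0) =
      {QuaternionGroup.a 0, QuaternionGroup.a (n : ZMod (2*n))} := by
    ext u
    rcases u with i | i
    · simp only [mem_filter, mem_univ, true_and, mem_insert, mem_singleton, a.injEq]; simp only [kk]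
      split_ifs with hc
      · simp only [eq_self_iff_true, true_iff]
        exact hc
      · constructor
        · intro h; exact absurd h (by decide)
        · intro h; exact absurd h hc
    · simp only [mem_filter, mem_univ, true_and, mem_insert, mem_singleton]; simp only [kk]
      constructor
      · intro h; exact absurd h (by decide)
      · rintro (h | h) <;> cases h
  rw [this, Finset.card_pair]
  intro h
  exact n_ne_zero_zmod hn (a_inj h).symm

lemma card_fiber1 [NeZero n] (hn : 3 ≤ n) :
    (Finset.univ.filter fun u : QuaternionGroup n => kk u = 1).card = 2*n - 2 := by
  have hpart := Finset.card_filter_add_card_filter_not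
    (s := (Finset.univ : Finset (QuaternionGroup n))) (p := fun u => kk u = 1)
  have hneg : (Finset.univ.filter fun u : QuaternionGroup n => ¬ kk u = 1) =
      (Finset.univ.filter fun u : QuaternionGroup n => kk u = 0) ∪
      (Finset.univ.filter fun u : QuaternionGroup n => kk u = 2) := by
    rw [← Finset.filter_or]
    apply Finset.filter_congr
    intro u _
    constructor
    · intro h
      have : ∀ c : Fin 3, c ≠ 1 → c = 0 ∨ c = 2 := by decide
      exact this _ h
    · rintro (h | h) <;> rw [h] <;> decide
  have hdisj : Disjoint (Finset.univ.filter fun u : QuaternionGroup n => kk u = 0)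
      (Finset.univ.filter fun u : QuaternionGroup n => kk u = 2) := by
    rw [Finset.disjoint_filter]
    intro u _ h0 h2
    rw [h0] at h2; exact absurd h2 (by decide)
  rw [hneg, Finset.card_union_of_disjoint hdisj, card_fiber0 hn, card_fiber2,
    Finset.card_univ, QuaternionGroup.card] at hpart
  omega
end SomborAux
namespace SomborAux
open QuaternionGroup Finset
variable {n : ℕ}

lemma sdeg_eq_filter [NeZero n] (v : QuaternionGroup n) :
    sdeg (Γq n) v = (Finset.univ.filter fun u => (Γq n).Adj v u).card := by
  rw [sdeg, Set.ncard_eq_toFinset_card']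
  congr 1
  ext u
  simp

lemma deg_of_kk0 [NeZero n] (hn : 3 ≤ n) (hodd : Odd n) (v : QuaternionGroup n)
    (hv : kk v = 0) : sdeg (Γq n) v = 4*n - 1 := by
  rw [sdeg_eq_filter]
  have h1 : (Finset.univ.filter fun u => (Γq n).Adj v u) = Finset.univ.erase v := by
    ext u
    simp only [mem_filter, mem_univ, true_and, mem_erase, and_true]
    rw [adj_iff hn hodd]
    constructor
    · rintro ⟨h, -⟩; exact h.symm
    · intro h; exact ⟨h.symm, Or.inr (Or.inl hv)⟩
  rw [h1, Finset.card_erase_of_mem (Finset.mem_univ v), Finset.card_univ,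
    QuaternionGroup.card]

lemma deg_of_kk1 [NeZero n] (hn : 3 ≤ n) (hodd : Odd n) (v : QuaternionGroup n)
    (hv : kk v = 1) : sdeg (Γq n) v = 2*n - 1 := by
  rw [sdeg_eq_filter]
  have h1 : (Finset.univ.filter fun u => (Γq n).Adj v u) =
      (Finset.univ.filter fun u : QuaternionGroup n => kk u = 1 ∨ kk u = 0).erase v := by
    ext u
    simp only [mem_filter, mem_univ, true_and, mem_erase]
    rw [adj_iff hn hodd, hv]
    constructor
    · rintro ⟨hne, h | h | h⟩
      · exact ⟨hne.symm, Or.inl h.symm⟩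
      · exact absurd h (by decide)
      · exact ⟨hne.symm, Or.inr h⟩
    · rintro ⟨hne, h | h⟩
      · exact ⟨hne.symm, Or.inl h.symm⟩
      · exact ⟨hne.symm, Or.inr (Or.inr h)⟩
  have hdisj : Disjoint (Finset.univ.filter fun u : QuaternionGroup n => kk u = 1)
      (Finset.univ.filter fun u : QuaternionGroup n => kk u = 0) := by
    rw [Finset.disjoint_filter]
    intro u _ h0 h2
    rw [h0] at h2; exact absurd h2 (by decide)
  have hvmem : v ∈ Finset.univ.filter fun u : QuaternionGroup n => kk u = 1 ∨ kk u = 0 :=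
    Finset.mem_filter.mpr ⟨Finset.mem_univ v, Or.inl hv⟩
  rw [h1, Finset.card_erase_of_mem hvmem, Finset.filter_or,
    Finset.card_union_of_disjoint hdisj, card_fiber1 hn, card_fiber0 hn]
  omega

lemma deg_of_kk2 [NeZero n] (hn : 3 ≤ n) (hodd : Odd n) (v : QuaternionGroup n)
    (hv : kk v = 2) : sdeg (Γq n) v = 2*n + 1 := by
  rw [sdeg_eq_filter]
  have h1 : (Finset.univ.filter fun u => (Γq n).Adj v u) =
      (Finset.univ.filter fun u : QuaternionGroup n => kk u = 2 ∨ kk u = 0).erase v := by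
    ext u
    simp only [mem_filter, mem_univ, true_and, mem_erase]
    rw [adj_iff hn hodd, hv]
    constructor
    · rintro ⟨hne, h | h | h⟩
      · exact ⟨hne.symm, Or.inl h.symm⟩
      · exact absurd h (by decide)
      · exact ⟨hne.symm, Or.inr h⟩
    · rintro ⟨hne, h | h⟩
      · exact ⟨hne.symm, Or.inl h.symm⟩
      · exact ⟨hne.symm, Or.inr (Or.inr h)⟩
  have hdisj : Disjoint (Finset.univ.filter fun u : QuaternionGroup n => kk u = 2)
      (Finset.univ.filter fun u : QuaternionGroup n => kk u = 0) := by
    rw [Finset.disjoint_filter]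
    intro u _ h0 h2
    rw [h0] at h2; exact absurd h2 (by decide)
  have hvmem : v ∈ Finset.univ.filter fun u : QuaternionGroup n => kk u = 2 ∨ kk u = 0 :=
    Finset.mem_filter.mpr ⟨Finset.mem_univ v, Or.inl hv⟩
  rw [h1, Finset.card_erase_of_mem hvmem, Finset.filter_or,
    Finset.card_union_of_disjoint hdisj, card_fiber2, card_fiber0 hn]
  omega
end SomborAux
namespace SomborAux
open QuaternionGroup Finset Matrix Polynomial
variable {n : ℕ}

/-- degrees by type -/
noncomputable def dd (n : ℕ) : Fin 3 → ℝ := ![4*(n:ℝ)-1, 2*(n:ℝ)-1, 2*(n:ℝ)+1]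

/-- block entries -/
noncomputable def BR (n : ℕ) : Matrix (Fin 3) (Fin 3) ℝ :=
  !![Real.sqrt ((dd n 0)^2 + (dd n 0)^2), Real.sqrt ((dd n 0)^2 + (dd n 1)^2),
       Real.sqrt ((dd n 0)^2 + (dd n 2)^2);
     Real.sqrt ((dd n 0)^2 + (dd n 1)^2), Real.sqrt ((dd n 1)^2 + (dd n 1)^2), 0;
     Real.sqrt ((dd n 0)^2 + (dd n 2)^2), 0, Real.sqrt ((dd n 2)^2 + (dd n 2)^2)]

lemma deg_cast [NeZero n] (hn : 3 ≤ n) (hodd : Odd n) (u : QuaternionGroup n) :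
    ((sdeg (Γq n) u : ℕ) : ℝ) = dd n (kk u) := by
  have h3 : ∀ c : Fin 3, c = 0 ∨ c = 1 ∨ c = 2 := by decide
  rcases h3 (kk u) with h | h | h <;> rw [h]
  · rw [deg_of_kk0 hn hodd u h]
    have : ((4*n-1 : ℕ) : ℝ) = 4*(n:ℝ)-1 := by
      have : 1 ≤ 4*n := by omega
      push_cast [Nat.cast_sub this]
      ring
    rw [this]; simp [dd]
  · rw [deg_of_kk1 hn hodd u h]
    have : ((2*n-1 : ℕ) : ℝ) = 2*(n:ℝ)-1 := by
      have : 1 ≤ 2*n := by omega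
      push_cast [Nat.cast_sub this]
      ring
    rw [this]; simp [dd]
  · rw [deg_of_kk2 hn hodd u h]
    push_cast
    simp [dd]

lemma BR_adj (i j : Fin 3) (h : i = j ∨ i = 0 ∨ j = 0) :
    BR n i j = Real.sqrt ((dd n i)^2 + (dd n j)^2) := by
  fin_cases i <;> fin_cases j <;>
    first
      | (exact absurd h (by decide))
      | (simp [BR]; try rw [add_comm ((dd n 0)^2)])

lemma BR_nonadj (i j : Fin 3) (h : ¬(i = j ∨ i = 0 ∨ j = 0)) : BR n i j = 0 := by
  fin_cases i <;> fin_cases j <;>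
    first
      | (exact absurd (by decide : _ = _ ∨ _) h)
      | simp [BR]

lemma sombor_eq [NeZero n] (hn : 3 ≤ n) (hodd : Odd n) :
    somborMatrix (Γq n) =
      Matrix.of fun u v => if u = v then (0:ℝ) else BR n (kk u) (kk v) := by
  ext u v
  rw [somborMatrix, Matrix.of_apply, Matrix.of_apply]
  by_cases huv : u = v
  · subst huv
    rw [if_pos rfl, if_neg (SimpleGraph.irrefl _)]
  · rw [if_neg huv]
    by_cases hadj : (Γq n).Adj u v
    · rw [if_pos hadj, deg_cast hn hodd, deg_cast hn hodd]
      have hcond := ((adj_iff hn hodd u v).mp hadj).2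
      exact (BR_adj _ _ hcond).symm
    · rw [if_neg hadj]
      have hcond : ¬(kk u = kk v ∨ kk u = 0 ∨ kk v = 0) := by
        intro hc
        exact hadj ((adj_iff hn hodd u v).mpr ⟨huv, hc⟩)
      exact (BR_nonadj _ _ hcond).symm

end SomborAux
namespace SomborAux
open Finset Matrix

lemma det_structured {V F : Type*} [Fintype V] [DecidableEq V] [Field F]
    (k : V → Fin 3) (t : F) (B : Matrix (Fin 3) (Fin 3) F)
    (hne : ∀ i : Fin 3, t + B i i ≠ 0)
    (m : Fin 3 → ℕ) (hm : ∀ i, (Finset.univ.filter (fun u => k u = i)).card = m i) :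
    Matrix.det (Matrix.of fun u v : V =>
        (if u = v then t else 0) - (if u = v then 0 else B (k u) (k v)))
    = (∏ i : Fin 3, (t + B i i) ^ m i) *
      Matrix.det (1 - B * Matrix.diagonal (fun i => (m i : F) * (t + B i i)⁻¹)) := by
  classical
  set Δ : Matrix V V F := Matrix.diagonal (fun u => t + B (k u) (k u)) with hΔ
  set Cm : Matrix V (Fin 3) F := Matrix.of (fun u i => if k u = i then 1 else 0) with hCm
  set E : Matrix V V F := Matrix.diagonal (fun u => (t + B (k u) (k u))⁻¹) with hE
  have hCB : ∀ (u : V) (j : Fin 3), (Cm * B) u j = B (k u) j := by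
    intro u j
    rw [Matrix.mul_apply]
    have : ∀ i : Fin 3, Cm u i * B i j = if k u = i then B i j else 0 := by
      intro i; rw [hCm]; simp only [Matrix.of_apply]; split_ifs <;> simp
    simp_rw [this]
    simp [Finset.sum_ite_eq]
  have hM : (Matrix.of fun u v : V =>
      (if u = v then t else 0) - (if u = v then 0 else B (k u) (k v)))
      = Δ - Cm * B * Cmᵀ := by
    ext u v
    have h2 : (Cm * B * Cmᵀ) u v = B (k u) (k v) := by
      rw [Matrix.mul_apply]
      have : ∀ j : Fin 3, (Cm * B) u j * Cmᵀ j v = if k v = j then B (k u) j else 0 := by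
        intro j
        rw [hCB, Matrix.transpose_apply, hCm]
        simp only [Matrix.of_apply]
        split_ifs <;> simp
      simp_rw [this]
      simp [Finset.sum_ite_eq]
    simp only [Matrix.of_apply, Matrix.sub_apply, h2, hΔ]
    by_cases h : u = v
    · subst h; simp [Matrix.diagonal_apply_eq]
    · simp [Matrix.diagonal_apply_ne _ h, h]
  have hΔE : Δ * E = 1 := by
    rw [hΔ, hE, Matrix.diagonal_mul_diagonal]
    have : ∀ u : V, (t + B (k u) (k u)) * (t + B (k u) (k u))⁻¹ = 1 := fun u =>
      mul_inv_cancel₀ (hne (k u))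
    simp only [this]
    exact Matrix.diagonal_one
  have hfact : (Δ - Cm * B * Cmᵀ) = Δ * (1 - E * (Cm * B * Cmᵀ)) := by
    rw [Matrix.mul_sub, Matrix.mul_one, ← Matrix.mul_assoc, hΔE, Matrix.one_mul]
  set D : Matrix (Fin 3) (Fin 3) F := Cmᵀ * (E * Cm) with hD
  have hDdiag : D = Matrix.diagonal (fun i => (m i : F) * (t + B i i)⁻¹) := by
    ext i j
    rw [hD, Matrix.mul_apply]
    have hsummand : ∀ u : V, Cmᵀ i u * (E * Cm) u j =
        if k u = i ∧ k u = j then (t + B i i)⁻¹ else 0 := by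
      intro u
      rw [Matrix.transpose_apply, hE, Matrix.diagonal_mul, hCm]
      simp only [Matrix.of_apply]
      by_cases h1 : k u = i
      · subst h1
        by_cases h2 : k u = j
        · subst h2; simp
        · simp [h2]
      · simp [h1]
    simp_rw [hsummand]
    rw [← Finset.sum_filter]
    rw [Finset.sum_const]
    by_cases hij : i = j
    · subst hij
      have : (Finset.univ.filter fun u : V => k u = i ∧ k u = i) =
          Finset.univ.filter fun u : V => k u = i := by
        apply Finset.filter_congr; tauto
      rw [this, hm i, Matrix.diagonal_apply_eq, nsmul_eq_mul]
    · have : (Finset.univ.filter fun u : V => k u = i ∧ k u = j) = ∅ := by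
        apply Finset.filter_false_of_mem
        rintro u - ⟨h1, h2⟩
        exact hij (h1 ▸ h2 ▸ rfl)
      rw [this, Matrix.diagonal_apply_ne _ hij]
      simp
  have hdet2 : Matrix.det (1 - E * (Cm * B * Cmᵀ)) = Matrix.det (1 - B * D) := by
    have h1 : E * (Cm * B * Cmᵀ) = (E * Cm) * (B * Cmᵀ) := by
      rw [Matrix.mul_assoc, Matrix.mul_assoc]
    have h2 : (1 : Matrix V V F) - (E * Cm) * (B * Cmᵀ) = 1 + (-(E * Cm)) * (B * Cmᵀ) := by
      rw [Matrix.neg_mul, sub_eq_add_neg]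
    rw [h1, h2, Matrix.det_one_add_mul_comm]
    congr 1
    rw [Matrix.mul_neg, Matrix.mul_assoc B Cmᵀ (E * Cm), ← sub_eq_add_neg]
  have hdetΔ : Matrix.det Δ = ∏ i : Fin 3, (t + B i i) ^ m i := by
    rw [hΔ, Matrix.det_diagonal]
    rw [← Finset.prod_fiberwise_of_maps_to (g := k) (t := Finset.univ)
      (fun x _ => Finset.mem_univ (k x))]
    apply Finset.prod_congr rfl
    intro i _
    rw [← hm i]
    rw [Finset.prod_congr rfl (fun u hu => ?_), Finset.prod_const]
    rw [(Finset.mem_filter.mp hu).2]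
  rw [hM, hfact, Matrix.det_mul, hdetΔ, hdet2, hDdiag]

lemma det3_eval {F : Type*} [Field F] (t R C1 C2 N m1 m2 : F)
    (h1 : C1^2 = (4*N-1)^2 + (2*N-1)^2) (h2 : C2^2 = (4*N-1)^2 + (2*N+1)^2)
    (hm1 : m1 = 2*N - 2) (hm2 : m2 = 2*N)
    (hb0 : t + (4*N-1)*R ≠ 0) (hb1 : t + (2*N-1)*R ≠ 0) (hb2 : t + (2*N+1)*R ≠ 0) :
    Matrix.det (1 - (!![(4*N-1)*R, C1, C2; C1, (2*N-1)*R, 0; C2, 0, (2*N+1)*R]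
        : Matrix (Fin 3) (Fin 3) F) *
      Matrix.diagonal (![(2:F) * (t + (4*N-1)*R)⁻¹, m1 * (t + (2*N-1)*R)⁻¹,
        m2 * (t + (2*N+1)*R)⁻¹])) =
    ((t - (4*N-1)*R) * (t - (2*N-1)*(2*N-3)*R) * (t - (2*N-1)*(2*N+1)*R)
      - (8*(N-1)*(10*N^2-6*N+1)) * (t - (2*N-1)*(2*N+1)*R)
      - (8*N*(10*N^2-2*N+1)) * (t - (2*N-1)*(2*N-3)*R))
      * ((t + (4*N-1)*R)⁻¹ * (t + (2*N-1)*R)⁻¹ * (t + (2*N+1)*R)⁻¹) := by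
  have hfact : (1 - (!![(4*N-1)*R, C1, C2; C1, (2*N-1)*R, 0; C2, 0, (2*N+1)*R]
        : Matrix (Fin 3) (Fin 3) F) *
      Matrix.diagonal (![(2:F) * (t + (4*N-1)*R)⁻¹, m1 * (t + (2*N-1)*R)⁻¹,
        m2 * (t + (2*N+1)*R)⁻¹])) =
      (!![t - (4*N-1)*R, -C1*m1, -C2*m2;
          -2*C1, t - (2*N-1)*(2*N-3)*R, 0;
          -2*C2, 0, t - (2*N-1)*(2*N+1)*R] : Matrix (Fin 3) (Fin 3) F) *
      Matrix.diagonal (![(t + (4*N-1)*R)⁻¹, (t + (2*N-1)*R)⁻¹, (t + (2*N+1)*R)⁻¹]) := by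
    ext i j
    rw [Matrix.sub_apply, Matrix.mul_diagonal, Matrix.mul_diagonal]
    fin_cases i <;> fin_cases j <;>
      simp [Matrix.one_apply, hm1, hm2] <;> field_simp <;> ring
  rw [hfact, Matrix.det_mul, Matrix.det_diagonal, Fin.prod_univ_three]
  have hdet : Matrix.det (!![t - (4*N-1)*R, -C1*m1, -C2*m2;
          -2*C1, t - (2*N-1)*(2*N-3)*R, 0;
          -2*C2, 0, t - (2*N-1)*(2*N+1)*R] : Matrix (Fin 3) (Fin 3) F) =
      ((t - (4*N-1)*R) * (t - (2*N-1)*(2*N-3)*R) * (t - (2*N-1)*(2*N+1)*R)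
      - (8*(N-1)*(10*N^2-6*N+1)) * (t - (2*N-1)*(2*N+1)*R)
      - (8*N*(10*N^2-2*N+1)) * (t - (2*N-1)*(2*N-3)*R)) := by
    simp [Matrix.det_fin_three]
    rw [hm1, hm2]
    linear_combination (-(2*(2*N-2)) * (t - (2*N-1)*(2*N+1)*R)) * h1 +
      (-(4*N) * (t - (2*N-1)*(2*N-3)*R)) * h2
  rw [hdet]
  simp only [Matrix.cons_val_zero, Matrix.cons_val_one, Matrix.head_cons, Matrix.cons_val_two,
    Matrix.tail_cons]
end SomborAux
section FinalProof
open SomborAux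

set_option maxHeartbeats 2000000 in
theorem stmt10 (n : ℕ) [NeZero n] (hn : 3 ≤ n) (hodd : Odd n) :
    somborCharpoly (superGraph (commutingGraph (QuaternionGroup n))
        (conjRel (QuaternionGroup n)) (conjRel_equivalence (QuaternionGroup n))) =
      (X + C ((4 * (n : ℝ) - 1) * rt2)) * (X + C ((2 * (n : ℝ) - 1) * rt2)) ^ (2 * n - 3) *
        (X + C ((2 * (n : ℝ) + 1) * rt2)) ^ (2 * n - 1) *
        ((X - C ((4 * (n : ℝ) - 1) * rt2)) *
            (X - C ((2 * (n : ℝ) - 1) * (2 * (n : ℝ) - 3) * rt2)) *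
            (X - C ((2 * (n : ℝ) - 1) * (2 * (n : ℝ) + 1) * rt2)) -
          C (8 * ((n : ℝ) - 1) * (10 * (n : ℝ) ^ 2 - 6 * (n : ℝ) + 1)) *
            (X - C ((2 * (n : ℝ) - 1) * (2 * (n : ℝ) + 1) * rt2)) -
          C (8 * (n : ℝ) * (10 * (n : ℝ) ^ 2 - 2 * (n : ℝ) + 1)) *
            (X - C ((2 * (n : ℝ) - 1) * (2 * (n : ℝ) - 3) * rt2))) := by
  classical
  have hn3 : (3:ℝ) ≤ (n:ℝ) := by exact_mod_cast hn
  have hd0 : (0:ℝ) ≤ 4*(n:ℝ)-1 := by linarith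
  have hd1 : (0:ℝ) ≤ 2*(n:ℝ)-1 := by linarith
  have hd2 : (0:ℝ) ≤ 2*(n:ℝ)+1 := by linarith
  set φ : ℝ[X] →+* RatFunc ℝ := (algebraMap ℝ[X] (RatFunc ℝ) : ℝ[X] →+* RatFunc ℝ) with hφdef
  have hφinj : Function.Injective φ := IsFractionRing.injective ℝ[X] (RatFunc ℝ)
  apply hφinj
  set γ : ℝ →+* RatFunc ℝ := φ.comp (Polynomial.C : ℝ →+* ℝ[X]) with hγdef
  have hγ : ∀ r : ℝ, φ (C r) = γ r := fun r => rfl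
  set t : RatFunc ℝ := φ X with htdef
  set N : RatFunc ℝ := ((n:ℕ) : RatFunc ℝ) with hNdef
  set Rf : RatFunc ℝ := γ rt2 with hRfdef
  set C1f : RatFunc ℝ := γ (Real.sqrt ((dd n 0)^2 + (dd n 1)^2)) with hC1fdef
  set C2f : RatFunc ℝ := γ (Real.sqrt ((dd n 0)^2 + (dd n 2)^2)) with hC2fdef
  -- scalar constants
  have hγn : γ ((n:ℕ):ℝ) = N := map_natCast γ n
  have hγd0 : γ (4*(n:ℝ)-1) = 4*N-1 := by
    rw [map_sub, map_mul, map_one, map_ofNat, hγn]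
  have hγd1 : γ (2*(n:ℝ)-1) = 2*N-1 := by
    rw [map_sub, map_mul, map_one, map_ofNat, hγn]
  have hγd2 : γ (2*(n:ℝ)+1) = 2*N+1 := by
    rw [map_add, map_mul, map_one, map_ofNat, hγn]
  have hγd3 : γ (2*(n:ℝ)-3) = 2*N-3 := by
    rw [map_sub, map_mul, map_ofNat, map_ofNat, hγn]
  -- real sqrt computations
  have hs : ∀ x : ℝ, 0 ≤ x → Real.sqrt (x^2 + x^2) = x * rt2 := by
    intro x hx
    rw [show x^2 + x^2 = x^2 * 2 by ring, Real.sqrt_mul (sq_nonneg x) 2, Real.sqrt_sq hx, rt2]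
  have hdd0 : dd n 0 = 4*(n:ℝ)-1 := by simp [SomborAux.dd]
  have hdd1 : dd n 1 = 2*(n:ℝ)-1 := by simp [SomborAux.dd]
  have hdd2 : dd n 2 = 2*(n:ℝ)+1 := by simp [SomborAux.dd]
  have hγ00 : γ (Real.sqrt ((dd n 0)^2 + (dd n 0)^2)) = (4*N-1) * Rf := by
    rw [hdd0, hs _ hd0, map_mul, hγd0, hRfdef]
  have hγ11 : γ (Real.sqrt ((dd n 1)^2 + (dd n 1)^2)) = (2*N-1) * Rf := by
    rw [hdd1, hs _ hd1, map_mul, hγd1, hRfdef]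
  have hγ22 : γ (Real.sqrt ((dd n 2)^2 + (dd n 2)^2)) = (2*N+1) * Rf := by
    rw [hdd2, hs _ hd2, map_mul, hγd2, hRfdef]
  have hC1sq : C1f^2 = (4*N-1)^2 + (2*N-1)^2 := by
    rw [hC1fdef, ← map_pow, Real.sq_sqrt (by positivity), map_add, map_pow, map_pow,
      hdd0, hdd1, hγd0, hγd1]
  have hC2sq : C2f^2 = (4*N-1)^2 + (2*N+1)^2 := by
    rw [hC2fdef, ← map_pow, Real.sq_sqrt (by positivity), map_add, map_pow, map_pow,
      hdd0, hdd2, hγd0, hγd2]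
  -- nonvanishing
  have hne' : ∀ c : ℝ, t + γ c ≠ 0 := by
    intro c
    have h1 : t + γ c = φ (X + C c) := by rw [map_add, hγ]
    rw [h1]
    exact fun h => Polynomial.X_add_C_ne_zero c (hφinj (h.trans (map_zero φ).symm))
  have hb0 : t + (4*N-1)*Rf ≠ 0 := by
    rw [show (4*N-1)*Rf = γ ((4*(n:ℝ)-1)*rt2) by rw [map_mul, hγd0, hRfdef]]
    exact hne' _
  have hb1 : t + (2*N-1)*Rf ≠ 0 := by
    rw [show (2*N-1)*Rf = γ ((2*(n:ℝ)-1)*rt2) by rw [map_mul, hγd1, hRfdef]]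
    exact hne' _
  have hb2 : t + (2*N+1)*Rf ≠ 0 := by
    rw [show (2*N+1)*Rf = γ ((2*(n:ℝ)+1)*rt2) by rw [map_mul, hγd2, hRfdef]]
    exact hne' _
  -- the B-matrix over RatFunc
  set BF : Matrix (Fin 3) (Fin 3) (RatFunc ℝ) :=
    Matrix.of (fun i j => γ (BR n i j)) with hBFdef
  -- step 1 : charpoly to det
  have step1 : φ (somborCharpoly (Γq n)) =
      Matrix.det ((Matrix.charmatrix (somborMatrix (Γq n))).map φ) := by
    rw [somborCharpoly, Matrix.charpoly, RingHom.map_det, RingHom.mapMatrix_apply]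
  have step2 : (Matrix.charmatrix (somborMatrix (Γq n))).map φ =
      Matrix.of (fun u v => (if u = v then t else 0) -
        (if u = v then 0 else BF (kk u) (kk v))) := by
    rw [sombor_eq hn hodd]
    ext u v
    rw [Matrix.map_apply, Matrix.of_apply]
    by_cases h : u = v
    · subst h
      rw [Matrix.charmatrix_apply_eq, map_sub, hγ, Matrix.of_apply, if_pos rfl, map_zero,
        sub_zero, if_pos rfl, if_pos rfl, sub_zero]
    · rw [Matrix.charmatrix_apply_ne _ _ _ h, map_neg, hγ, Matrix.of_apply, if_neg h,
        if_neg h, if_neg h, zero_sub]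
      rfl
  have hmcard : ∀ i : Fin 3,
      (Finset.univ.filter (fun u : QuaternionGroup n => kk u = i)).card
        = (![2, 2*n-2, 2*n]) i := by
    intro i
    fin_cases i
    · simpa using card_fiber0 hn
    · simpa using card_fiber1 hn
    · simpa using card_fiber2
  have step3 := det_structured (V := QuaternionGroup n) (F := RatFunc ℝ) kk t BF
    (fun i => hne' (BR n i i)) (![2, 2*n-2, 2*n]) hmcard
  -- identify BF as a literal matrix
  have hBFlit : BF = !![(4*N-1)*Rf, C1f, C2f; C1f, (2*N-1)*Rf, 0; C2f, 0, (2*N+1)*Rf] := by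
    ext i j
    fin_cases i <;> fin_cases j <;>
      simp [hBFdef, SomborAux.BR, hγ00, hγ11, hγ22, hC1fdef, hC2fdef]
  have hm1cast : ((2*n-2 : ℕ) : RatFunc ℝ) = 2*N-2 := by
    have h2 : 2 ≤ 2*n := by omega
    rw [hNdef]
    push_cast [Nat.cast_sub h2]
    ring
  have hm2cast : ((2*n : ℕ) : RatFunc ℝ) = 2*N := by
    rw [hNdef]; push_cast; ring
  have hdiagfun : (fun i : Fin 3 => (((![2, 2*n-2, 2*n]) i : ℕ) : RatFunc ℝ) *
      (t + (!![(4*N-1)*Rf, C1f, C2f; C1f, (2*N-1)*Rf, 0; C2f, 0, (2*N+1)*Rf]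
        : Matrix (Fin 3) (Fin 3) (RatFunc ℝ)) i i)⁻¹) =
      ![(2 : RatFunc ℝ) * (t + (4*N-1)*Rf)⁻¹, ((2*n-2 : ℕ) : RatFunc ℝ) * (t + (2*N-1)*Rf)⁻¹,
        ((2*n : ℕ) : RatFunc ℝ) * (t + (2*N+1)*Rf)⁻¹] := by
    funext i
    fin_cases i <;> simp
  rw [step1, step2, step3, hBFlit, hdiagfun,
    det3_eval t Rf C1f C2f N ((2*n-2 : ℕ) : RatFunc ℝ) ((2*n : ℕ) : RatFunc ℝ)
      hC1sq hC2sq hm1cast hm2cast hb0 hb1 hb2]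
  -- expand the product of diagonal factors
  rw [Fin.prod_univ_three]
  simp only [Matrix.cons_val_zero, Matrix.cons_val_one, Matrix.head_cons, Matrix.cons_val_two,
    Matrix.tail_cons, Matrix.cons_val', Matrix.empty_val', Matrix.cons_val_fin_one,
    Matrix.head_fin_const]
  -- map RHS
  have hq0 : γ ((4*(n:ℝ)-1)*rt2) = (4*N-1)*Rf := by rw [map_mul, hγd0, hRfdef]
  have hq1 : γ ((2*(n:ℝ)-1)*rt2) = (2*N-1)*Rf := by rw [map_mul, hγd1, hRfdef]
  have hq2 : γ ((2*(n:ℝ)+1)*rt2) = (2*N+1)*Rf := by rw [map_mul, hγd2, hRfdef]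
  have hq13 : γ ((2*(n:ℝ)-1)*(2*(n:ℝ)-3)*rt2) = (2*N-1)*(2*N-3)*Rf := by
    rw [map_mul, map_mul, hγd1, hγd3, hRfdef]
  have hq12 : γ ((2*(n:ℝ)-1)*(2*(n:ℝ)+1)*rt2) = (2*N-1)*(2*N+1)*Rf := by
    rw [map_mul, map_mul, hγd1, hγd2, hRfdef]
  have hq8a : γ (8*((n:ℝ)-1)*(10*(n:ℝ)^2-6*(n:ℝ)+1)) = 8*(N-1)*(10*N^2-6*N+1) := by
    simp only [map_mul, map_sub, map_add, map_pow, map_ofNat, map_one, hγn]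
  have hq8b : γ (8*(n:ℝ)*(10*(n:ℝ)^2-2*(n:ℝ)+1)) = 8*N*(10*N^2-2*N+1) := by
    simp only [map_mul, map_sub, map_add, map_pow, map_ofNat, map_one, hγn]
  simp only [map_mul, map_sub, map_add, map_pow, map_ofNat, map_one, map_natCast, hγ]
  rw [hNdef, hRfdef, htdef]
  rw [hNdef, hRfdef, htdef] at hb0 hb1 hb2
  simp only [Matrix.of_apply, Matrix.cons_val', Matrix.cons_val_zero, Matrix.cons_val_one,
    Matrix.head_cons, Matrix.cons_val_two, Matrix.tail_cons, Matrix.empty_val',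
    Matrix.cons_val_fin_one, Matrix.head_fin_const, Fin.isValue]
  rw [show (φ X + (2*((n:ℕ):RatFunc ℝ)-1)*(γ rt2))^(2*n-2)
        = (φ X + (2*((n:ℕ):RatFunc ℝ)-1)*(γ rt2))^(2*n-3) * (φ X + (2*((n:ℕ):RatFunc ℝ)-1)*(γ rt2))
      from by rw [← pow_succ]; congr 1; omega]
  rw [show (φ X + (2*((n:ℕ):RatFunc ℝ)+1)*(γ rt2))^(2*n)
        = (φ X + (2*((n:ℕ):RatFunc ℝ)+1)*(γ rt2))^(2*n-1) * (φ X + (2*((n:ℕ):RatFunc ℝ)+1)*(γ rt2))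
      from by rw [← pow_succ]; congr 1; omega]
  generalize (φ X + (2*((n:ℕ):RatFunc ℝ)-1)*(γ rt2))^(2*n-3) = Pv
  generalize (φ X + (2*((n:ℕ):RatFunc ℝ)+1)*(γ rt2))^(2*n-1) = Qv
  generalize (φ X + (4*((n:ℕ):RatFunc ℝ)-1)*(γ rt2)) = A at hb0 ⊢
  generalize (φ X + (2*((n:ℕ):RatFunc ℝ)-1)*(γ rt2)) = B at hb1 ⊢
  generalize (φ X + (2*((n:ℕ):RatFunc ℝ)+1)*(γ rt2)) = D at hb2 ⊢
  field_simp
end FinalProof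
end

section
/- For every integer n ≥ 3, the Sombor characteristic polynomial of the enhanced power graph P_E(D_{2n}) of the dihedral group D_{2n} equals (x + (n−1)·√2)^{n−2} · x^{n−1} · [ x²·(x − (n−1)(n−2)·√2) − (n−1)(5n² − 6n + 2)·x − 2n(2n² − 2n + 1)·(x − (n−1)(n−2)·√2) ]. -/
open Polynomial
open scoped Classical

section Aux
open DihedralGroup

variable {n : ℕ} [NeZero n]

lemma r_pow (k : ZMod n) (m : ℕ) : (r k : DihedralGroup n) ^ m = r ((m : ZMod n) * k) := by
  induction m with
  | zero => simp [one_def, -r_zero]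
  | succ m ih => rw [pow_succ, ih, r_mul_r]; push_cast; ring_nf

lemma r_inv (k : ZMod n) : (r k : DihedralGroup n)⁻¹ = r (-k) := by
  apply inv_eq_of_mul_eq_one_right; rw [r_mul_r, add_neg_cancel, one_def]

lemma r_zpow (k : ZMod n) (m : ℤ) : (r k : DihedralGroup n) ^ m = r ((m : ZMod n) * k) := by
  cases m with
  | ofNat m => rw [Int.ofNat_eq_coe, zpow_natCast, _root_.r_pow]; norm_num
  | negSucc m => rw [zpow_negSucc, _root_.r_pow, r_inv]; push_cast; ring_nf

lemma mem_zpowers_r {k : ZMod n} {x : DihedralGroup n} (hx : x ∈ Subgroup.zpowers (r k)) :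
    ∃ j, x = r j := by
  obtain ⟨m, rfl⟩ := Subgroup.mem_zpowers_iff.mp hx
  exact ⟨(m : ZMod n) * k, r_zpow k m⟩

lemma mem_zpowers_sr {k : ZMod n} {x : DihedralGroup n} (hx : x ∈ Subgroup.zpowers (sr k)) :
    x = 1 ∨ x = sr k := by
  obtain ⟨m, rfl⟩ := Subgroup.mem_zpowers_iff.mp hx
  have h2 : (sr k : DihedralGroup n) ^ (2:ℤ) = 1 := by
    rw [zpow_two, sr_mul_self]
  have := Int.emod_emod_of_dvd m (dvd_refl 2)
  have hm : (sr k : DihedralGroup n) ^ m = sr k ^ (m % 2) := by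
    conv_lhs => rw [← Int.emod_add_mul_ediv m 2, zpow_add, zpow_mul, h2, one_zpow, mul_one]
  have h01 : m % 2 = 0 ∨ m % 2 = 1 := by omega
  rcases h01 with h | h <;> rw [hm, h]
  · left; simp
  · right; simp

lemma r_mem_zpowers_r_one [NeZero n] (i : ZMod n) :
    (r i : DihedralGroup n) ∈ Subgroup.zpowers (r 1) := by
  refine ⟨(i.val : ℤ), ?_⟩
  show (r 1 : DihedralGroup n) ^ (i.val : ℤ) = r i
  rw [_root_.r_zpow, mul_one]
  exact congrArg r (by push_cast; simp)

lemma adj_r_r [NeZero n] {i j : ZMod n} (h : i ≠ j) :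
    (enhancedPowerGraph (DihedralGroup n)).Adj (r i) (r j) :=
  ⟨by simp [h], r 1, r_mem_zpowers_r_one i, r_mem_zpowers_r_one j⟩

lemma adj_one {x : DihedralGroup n} (h : x ≠ 1) :
    (enhancedPowerGraph (DihedralGroup n)).Adj 1 x :=
  ⟨Ne.symm h, x, Subgroup.one_mem _, Subgroup.mem_zpowers x⟩

lemma not_adj_sr {i : ZMod n} {x : DihedralGroup n} (hx : x ≠ 1) (hxi : x ≠ sr i) :
    ¬ (enhancedPowerGraph (DihedralGroup n)).Adj (sr i) x := by
  rintro ⟨-, z, hz1, hz2⟩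
  cases z with
  | r k => obtain ⟨j, hj⟩ := mem_zpowers_r hz1; exact absurd hj (by simp)
  | sr k =>
    rcases mem_zpowers_sr hz1 with h | h
    · exact absurd h (by simp [one_def, -r_zero])
    · cases h
      rcases mem_zpowers_sr hz2 with h | h
      · exact hx h
      · exact hxi h


lemma r_injective : Function.Injective (r : ZMod n → DihedralGroup n) := by
  intro a b h; injection h

lemma sr_ne_one (i : ZMod n) : (sr i : DihedralGroup n) ≠ 1 := by simp [one_def, -r_zero]

lemma not_adj_r_sr [NeZero n] {i j : ZMod n} (hi : i ≠ 0) :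
    ¬ (enhancedPowerGraph (DihedralGroup n)).Adj (r i) (sr j) := by
  intro h
  exact not_adj_sr (x := r i) (i := j) (by simp [one_def, -r_zero, hi]) (by simp) h.symm

lemma nbhd_r [NeZero n] {i : ZMod n} (hi : i ≠ 0) :
    {u | (enhancedPowerGraph (DihedralGroup n)).Adj (r i) u} = r '' {i}ᶜ := by
  ext u
  constructor
  · intro hu
    cases u with
    | r j =>
      refine ⟨j, ?_, rfl⟩
      intro hj; cases hj
      exact (enhancedPowerGraph (DihedralGroup n)).irrefl hu
    | sr j => exact absurd hu (not_adj_r_sr hi)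
  · rintro ⟨j, hj, rfl⟩
    exact adj_r_r fun h => hj h.symm

lemma nbhd_one [NeZero n] :
    {u | (enhancedPowerGraph (DihedralGroup n)).Adj 1 u} = {(1 : DihedralGroup n)}ᶜ := by
  ext u
  simp only [Set.mem_setOf_eq, Set.mem_compl_iff, Set.mem_singleton_iff]
  exact ⟨fun h hu => (enhancedPowerGraph (DihedralGroup n)).irrefl (hu ▸ h),
    fun h => adj_one h⟩

lemma nbhd_sr [NeZero n] (i : ZMod n) :
    {u | (enhancedPowerGraph (DihedralGroup n)).Adj (sr i) u} = {(1 : DihedralGroup n)} := by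
  ext u
  simp only [Set.mem_setOf_eq, Set.mem_singleton_iff]
  constructor
  · intro h
    by_contra hu
    refine not_adj_sr hu ?_ h
    rintro rfl; exact (enhancedPowerGraph (DihedralGroup n)).irrefl h
  · rintro rfl
    exact (adj_one (sr_ne_one i)).symm

lemma ncard_compl_singleton {α : Type*} [Fintype α] (a : α) :
    ({a}ᶜ : Set α).ncard = Fintype.card α - 1 := by
  have : ({a}ᶜ : Set α) = Set.univ \ {a} := by ext x; simp
  rw [this, Set.ncard_diff_singleton_of_mem (Set.mem_univ a), Set.ncard_univ, Nat.card_eq_fintype_card]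

lemma sdeg_r [NeZero n] {i : ZMod n} (hi : i ≠ 0) :
    sdeg (enhancedPowerGraph (DihedralGroup n)) (r i) = n - 1 := by
  rw [sdeg, nbhd_r hi, Set.ncard_image_of_injective _ r_injective,
    ncard_compl_singleton, ZMod.card]

lemma sdeg_one [NeZero n] :
    sdeg (enhancedPowerGraph (DihedralGroup n)) 1 = 2 * n - 1 := by
  rw [sdeg, nbhd_one, ncard_compl_singleton, DihedralGroup.card]

lemma sdeg_sr [NeZero n] (i : ZMod n) :
    sdeg (enhancedPowerGraph (DihedralGroup n)) (sr i) = 1 := by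
  rw [sdeg, nbhd_sr, Set.ncard_singleton]


noncomputable def aa (n : ℕ) : ℝ := ((n:ℝ) - 1) * Real.sqrt 2
noncomputable def bb (n : ℕ) : ℝ := Real.sqrt ((2*(n:ℝ)-1)^2 + ((n:ℝ)-1)^2)
noncomputable def cc (n : ℕ) : ℝ := Real.sqrt ((2*(n:ℝ)-1)^2 + 1)

/-- explicit Sombor matrix -/
noncomputable def Mm (n : ℕ) : Matrix (ZMod n ⊕ ZMod n) (ZMod n ⊕ ZMod n) ℝ :=
  fun u v => match u, v with
  | .inl i, .inl j => if i = j then 0 else if i = 0 ∨ j = 0 then bb n else aa n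
  | .inl i, .inr _ => if i = 0 then cc n else 0
  | .inr _, .inl j => if j = 0 then cc n else 0
  | .inr _, .inr _ => 0

def dEquiv (n : ℕ) : (ZMod n ⊕ ZMod n) ≃ DihedralGroup n where
  toFun := Sum.elim r sr
  invFun := fun g => match g with | .r i => .inl i | .sr i => .inr i
  left_inv := by rintro (i | i) <;> rfl
  right_inv := by rintro (i | i) <;> rfl

lemma cast_n1 (hn : 3 ≤ n) : ((n-1 : ℕ) : ℝ) = (n:ℝ) - 1 := by
  have : 1 ≤ n := by omega
  push_cast [this]; ring

lemma cast_2n1 (hn : 3 ≤ n) : ((2*n-1 : ℕ) : ℝ) = 2*(n:ℝ) - 1 := by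
  have : 1 ≤ 2*n := by omega
  push_cast [this]; ring

lemma sombor_eq (hn : 3 ≤ n) :
    Matrix.reindex (dEquiv n).symm (dEquiv n).symm
      (somborMatrix (enhancedPowerGraph (DihedralGroup n))) = Mm n := by
  haveI : Fact (1 < n) := ⟨by omega⟩
  have hdone : ((sdeg (enhancedPowerGraph (DihedralGroup n)) 1 : ℕ) : ℝ) = 2*(n:ℝ)-1 := by
    rw [sdeg_one, cast_2n1 hn]
  have hdr : ∀ {i : ZMod n}, i ≠ 0 →
      ((sdeg (enhancedPowerGraph (DihedralGroup n)) (r i) : ℕ) : ℝ) = (n:ℝ)-1 := by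
    intro i hi; rw [sdeg_r hi, cast_n1 hn]
  ext u v
  rcases u with i | i <;> rcases v with j | j <;>
    simp only [Matrix.reindex_apply, Matrix.submatrix_apply, Equiv.symm_symm, dEquiv,
      Equiv.coe_fn_mk, Sum.elim_inl, Sum.elim_inr, somborMatrix, Matrix.of_apply, Mm]
  · -- rot rot
    by_cases hij : i = j
    · subst hij
      rw [if_neg ((enhancedPowerGraph (DihedralGroup n)).irrefl), if_pos rfl]
    · rw [if_pos (adj_r_r hij), if_neg hij]
      by_cases hi : i = 0
      · subst hi
        have hj : j ≠ 0 := fun h => hij h.symm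
        rw [if_pos (Or.inl rfl), ← one_def, hdone, hdr hj, bb]
      · by_cases hj : j = 0
        · subst hj
          rw [if_pos (Or.inr rfl), ← one_def, hdr hi, hdone, bb, add_comm]
        · rw [if_neg (by tauto), hdr hi, hdr hj, aa]
          have h1 : (1:ℝ) ≤ (n:ℝ) := by exact_mod_cast Nat.one_le_cast.mpr (by omega)
          rw [show ((n:ℝ)-1)^2 + ((n:ℝ)-1)^2 = 2 * ((n:ℝ)-1)^2 by ring,
            Real.sqrt_mul (by norm_num), Real.sqrt_sq (by linarith)]
          ring
  · -- rot refl
    by_cases hi : i = 0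
    · subst hi
      rw [if_pos (by rw [← one_def]; exact adj_one (sr_ne_one j)), if_pos rfl, ← one_def,
        hdone, sdeg_sr, cc]
      norm_num
    · rw [if_neg (not_adj_r_sr hi), if_neg hi]
  · -- refl rot
    by_cases hj : j = 0
    · subst hj
      rw [if_pos (by rw [← one_def]; exact (adj_one (sr_ne_one i)).symm), if_pos rfl, ← one_def,
        sdeg_sr, hdone, cc]
      norm_num [add_comm]
    · have : (r j : DihedralGroup n) ≠ 1 := by simp [one_def, -r_zero, hj]
      rw [if_neg (fun h => not_adj_sr this (by simp) h), if_neg hj]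
  · -- refl refl
    by_cases hij : i = j
    · subst hij; rw [if_neg ((enhancedPowerGraph (DihedralGroup n)).irrefl)]
    · rw [if_neg (not_adj_sr (sr_ne_one j) (by simp [Ne.symm hij]))]


def special (v : ZMod n ⊕ ZMod n) : Prop :=
  v = .inl 0 ∨ v = .inl 1 ∨ v = .inr 0

def anchor : ZMod n ⊕ ZMod n → ZMod n ⊕ ZMod n := Sum.elim (fun _ => .inl 1) (fun _ => .inr 0)

noncomputable def Nm (n : ℕ) : Matrix (ZMod n ⊕ ZMod n) (ZMod n ⊕ ZMod n) ℝ :=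
  fun u v => if special v then 0 else if u = anchor v then 1 else 0

noncomputable def Tm (n : ℕ) : Matrix (ZMod n ⊕ ZMod n) (ZMod n ⊕ ZMod n) ℝ :=
  fun u v =>
    if v = .inl 0 then
      (if u = .inl 0 then 0 else if u = .inl 1 then ((n:ℝ)-1) * bb n
       else if u = .inr 0 then (n:ℝ) * cc n
       else match u with | .inl _ => bb n | .inr _ => cc n)
    else if v = .inl 1 then
      (if u = .inl 0 then bb n else if u = .inl 1 then ((n:ℝ)-2) * aa n
       else if u = .inr 0 then 0
       else match u with | .inl _ => aa n | .inr _ => 0)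
    else if v = .inr 0 then (if u = .inl 0 then cc n else 0)
    else match v with
      | .inl _ => if u = v then -(aa n) else 0
      | .inr _ => 0

/-- the product `Nm * Tm`. -/
noncomputable def RR (n : ℕ) : Matrix (ZMod n ⊕ ZMod n) (ZMod n ⊕ ZMod n) ℝ :=
  fun u v =>
    if u = .inl 1 then
      (if v = .inl 0 then ((n:ℝ)-2) * bb n else if v = .inl 1 then ((n:ℝ)-2) * aa n
       else if v = .inr 0 then 0
       else match v with | .inl _ => -(aa n) | .inr _ => 0)
    else if u = .inr 0 then (if v = .inl 0 then ((n:ℝ)-1) * cc n else 0)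
    else 0

lemma special_anchor (v : ZMod n ⊕ ZMod n) : special (anchor v) := by
  rcases v with i | i
  · right; left; rfl
  · right; right; rfl

lemma Nm_mul_Nm : Nm n * Nm n = 0 := by
  ext u v
  rw [Matrix.mul_apply]
  apply Finset.sum_eq_zero
  intro w _
  by_cases hv : special v
  · simp [Nm, hv]
  · by_cases hw : w = anchor v
    · subst hw
      simp [Nm, special_anchor v]
    · simp [Nm, hv, hw]

lemma mul_Nm (A : Matrix (ZMod n ⊕ ZMod n) (ZMod n ⊕ ZMod n) ℝ) (u v : ZMod n ⊕ ZMod n) :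
    (A * Nm n) u v = if special v then 0 else A u (anchor v) := by
  rw [Matrix.mul_apply]
  by_cases hv : special v
  · simp [Nm, hv]
  · rw [if_neg hv]
    have : ∀ w, A u w * Nm n w v = if w = anchor v then A u w else 0 := by
      intro w
      by_cases hw : w = anchor v
      · subst hw; simp [Nm, hv]
      · simp [Nm, hv, hw]
    simp_rw [this]
    rw [Finset.sum_ite_eq' Finset.univ (anchor v) (fun w => A u w), if_pos (Finset.mem_univ _)]

lemma cast_sub2 (hn : 3 ≤ n) : ((n - 2 : ℕ) : ℝ) = (n:ℝ) - 2 := by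
  have : 2 ≤ n := by omega
  push_cast [this]; ring

lemma cast_sub1 (hn : 3 ≤ n) : ((n - 1 : ℕ) : ℝ) = (n:ℝ) - 1 := by
  have : 1 ≤ n := by omega
  push_cast [this]; ring

lemma sum_ite01 (hn : 3 ≤ n) (c : ℝ) :
    ∑ k : ZMod n, (if k = 0 ∨ k = 1 then 0 else c) = ((n:ℝ) - 2) * c := by
  haveI : Fact (1 < n) := ⟨by omega⟩
  rw [Finset.sum_ite, Finset.sum_const, Finset.sum_const, smul_zero, zero_add]
  have h1 : Finset.univ.filter (fun k : ZMod n => ¬(k = 0 ∨ k = 1)) =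
      Finset.univ \ {0, 1} := by
    ext k; simp [not_or]
  rw [h1, Finset.card_sdiff_of_subset (by simp), Finset.card_univ, ZMod.card,
    Finset.card_pair (by exact zero_ne_one)]
  rw [nsmul_eq_mul, cast_sub2 hn]

lemma sum_ite0 (hn : 3 ≤ n) (c : ℝ) :
    ∑ k : ZMod n, (if k = 0 then 0 else c) = ((n:ℝ) - 1) * c := by
  rw [Finset.sum_ite, Finset.sum_const, Finset.sum_const, smul_zero, zero_add]
  have h1 : Finset.univ.filter (fun k : ZMod n => ¬(k = 0)) = Finset.univ \ {0} := by
    ext k; simp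
  rw [h1, Finset.card_sdiff_of_subset (by simp), Finset.card_univ, ZMod.card, Finset.card_singleton]
  rw [nsmul_eq_mul, cast_sub1 hn]

lemma special_inl (i : ZMod n) : special (Sum.inl i : ZMod n ⊕ ZMod n) ↔ i = 0 ∨ i = 1 := by
  simp [special]

lemma special_inr (i : ZMod n) : special (Sum.inr i : ZMod n ⊕ ZMod n) ↔ i = 0 := by
  simp [special]

lemma Nm_mul_Tm (hn : 3 ≤ n) : Nm n * Tm n = RR n := by
  haveI : Fact (1 < n) := ⟨by omega⟩
  ext u v
  rw [Matrix.mul_apply, Fintype.sum_sum_type]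
  have hNl : ∀ k : ZMod n, Nm n u (.inl k) =
      if k = 0 ∨ k = 1 then 0 else if u = .inl 1 then 1 else 0 := by
    intro k
    rw [Nm]
    by_cases h : k = 0 ∨ k = 1
    · rw [if_pos ((special_inl k).mpr h), if_pos h]
    · rw [if_neg (fun hs => h ((special_inl k).mp hs)), if_neg h]; rfl
  have hNr : ∀ k : ZMod n, Nm n u (.inr k) =
      if k = 0 then 0 else if u = .inr 0 then 1 else 0 := by
    intro k
    rw [Nm]
    by_cases h : k = 0
    · rw [if_pos ((special_inr k).mpr h), if_pos h]
    · rw [if_neg (fun hs => h ((special_inr k).mp hs)), if_neg h]; rfl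
  simp_rw [hNl, hNr]
  by_cases hu1 : u = .inl 1
  · subst hu1
    have h2 : ∑ k : ZMod n, (if k = 0 then (0:ℝ) else if (Sum.inl 1 : ZMod n ⊕ ZMod n) = .inr 0 then 1 else 0) * Tm n (.inr k) v = 0 := by
      apply Finset.sum_eq_zero; intro k _
      by_cases h : k = 0 <;> simp [h]
    rw [h2, add_zero]
    have h3 : ∀ k : ZMod n, (if k = 0 ∨ k = 1 then (0:ℝ) else if (Sum.inl 1 : ZMod n ⊕ ZMod n) = .inl 1 then 1 else 0) * Tm n (.inl k) v
        = if k = 0 ∨ k = 1 then 0 else Tm n (.inl k) v := by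
      intro k; by_cases h : k = 0 ∨ k = 1 <;> simp [h]
    rw [Finset.sum_congr rfl (fun k _ => h3 k)]
    -- now case on v
    rcases v with j | j
    · by_cases hj0 : j = 0
      · subst hj0
        have : ∀ k : ZMod n, (if k = 0 ∨ k = 1 then (0:ℝ) else Tm n (.inl k) (.inl 0)) =
            if k = 0 ∨ k = 1 then 0 else bb n := by
          intro k; by_cases h : k = 0 ∨ k = 1
          · simp [h]
          · push_neg at h
            rw [if_neg (by tauto), if_neg (by tauto), Tm]
            simp [h.1, h.2]
        simp_rw [this]
        rw [sum_ite01 hn, RR]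
        simp
      · by_cases hj1 : j = 1
        · subst hj1
          have : ∀ k : ZMod n, (if k = 0 ∨ k = 1 then (0:ℝ) else Tm n (.inl k) (.inl 1)) =
              if k = 0 ∨ k = 1 then 0 else aa n := by
            intro k; by_cases h : k = 0 ∨ k = 1
            · simp [h]
            · push_neg at h
              rw [if_neg (by tauto), if_neg (by tauto), Tm]
              simp [h.1, h.2, (by exact zero_ne_one : (0:ZMod n) ≠ 1).symm]
          simp_rw [this]
          rw [sum_ite01 hn, RR]
          simp [(by exact zero_ne_one : (0:ZMod n) ≠ 1).symm]
        · -- v = inl j nonspecial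
          have : ∀ k : ZMod n, (if k = 0 ∨ k = 1 then (0:ℝ) else Tm n (.inl k) (.inl j)) =
              if k = j then -(aa n) else 0 := by
            intro k
            by_cases h : k = 0 ∨ k = 1
            · rw [if_pos h, if_neg]; rintro rfl; tauto
            · push_neg at h
              rw [if_neg (by tauto), Tm]
              rw [if_neg (by simp [hj0]), if_neg (by simp [hj1]), if_neg (by simp)]
              simp
          simp_rw [this]
          rw [Finset.sum_ite_eq' Finset.univ j, if_pos (Finset.mem_univ _), RR]
          simp [hj0, hj1]
    · -- v = inr j
      have : ∀ k : ZMod n, (if k = 0 ∨ k = 1 then (0:ℝ) else Tm n (.inl k) (.inr j)) = 0 := by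
        intro k
        by_cases h : k = 0 ∨ k = 1
        · simp [h]
        · push_neg at h
          rw [if_neg (by tauto), Tm]
          by_cases hj : j = 0 <;> simp [h.1, h.2, hj]
      simp_rw [this]
      rw [Finset.sum_const_zero, RR]
      by_cases hj : j = 0 <;> simp [hj]
  · by_cases hu2 : u = .inr 0
    · subst hu2
      have h2 : ∑ k : ZMod n, (if k = 0 ∨ k = 1 then (0:ℝ) else if (Sum.inr 0 : ZMod n ⊕ ZMod n) = .inl 1 then 1 else 0) * Tm n (.inl k) v = 0 := by
        apply Finset.sum_eq_zero; intro k _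
        by_cases h : k = 0 ∨ k = 1 <;> simp [h]
      rw [h2, zero_add]
      have h3 : ∀ k : ZMod n, (if k = 0 then (0:ℝ) else if (Sum.inr 0 : ZMod n ⊕ ZMod n) = .inr 0 then 1 else 0) * Tm n (.inr k) v
          = if k = 0 then 0 else Tm n (.inr k) v := by
        intro k; by_cases h : k = 0 <;> simp [h]
      rw [Finset.sum_congr rfl (fun k _ => h3 k)]
      rcases v with j | j
      · by_cases hj0 : j = 0
        · subst hj0
          have : ∀ k : ZMod n, (if k = 0 then (0:ℝ) else Tm n (.inr k) (.inl 0)) =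
              if k = 0 then 0 else cc n := by
            intro k; by_cases h : k = 0
            · simp [h]
            · rw [if_neg h, if_neg h, Tm]; simp [h]
          simp_rw [this]
          rw [sum_ite0 hn, RR]
          simp
        · by_cases hj1 : j = 1
          · subst hj1
            have : ∀ k : ZMod n, (if k = 0 then (0:ℝ) else Tm n (.inr k) (.inl 1)) = 0 := by
              intro k; by_cases h : k = 0
              · simp [h]
              · rw [if_neg h, Tm]
                simp [h, (by exact zero_ne_one : (0:ZMod n) ≠ 1).symm]
            simp_rw [this]
            rw [Finset.sum_const_zero, RR]
            simp [(by exact zero_ne_one : (0:ZMod n) ≠ 1).symm]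
          · have : ∀ k : ZMod n, (if k = 0 then (0:ℝ) else Tm n (.inr k) (.inl j)) = 0 := by
              intro k; by_cases h : k = 0
              · simp [h]
              · rw [if_neg h, Tm]
                rw [if_neg (by simp [hj0]), if_neg (by simp [hj1]), if_neg (by simp)]
                simp
            simp_rw [this]
            rw [Finset.sum_const_zero, RR]
            simp [hj0, hj1]
      · have : ∀ k : ZMod n, (if k = 0 then (0:ℝ) else Tm n (.inr k) (.inr j)) = 0 := by
          intro k; by_cases h : k = 0
          · simp [h]
          · rw [if_neg h, Tm]
            by_cases hj : j = 0 <;> simp [h, hj]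
        simp_rw [this]
        rw [Finset.sum_const_zero, RR]
        by_cases hj : j = 0 <;> simp [hj]
    · -- u not inl 1, not inr 0: row of Nm is zero
      have h2 : ∑ k : ZMod n, (if k = 0 ∨ k = 1 then (0:ℝ) else if u = .inl 1 then 1 else 0) * Tm n (.inl k) v = 0 := by
        apply Finset.sum_eq_zero; intro k _
        by_cases h : k = 0 ∨ k = 1 <;> simp [h, hu1]
      have h3 : ∑ k : ZMod n, (if k = 0 then (0:ℝ) else if u = .inr 0 then 1 else 0) * Tm n (.inr k) v = 0 := by
        apply Finset.sum_eq_zero; intro k _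
        by_cases h : k = 0 <;> simp [h, hu2]
      rw [h2, h3, add_zero, RR.eq_def, if_neg hu1, if_neg hu2]


set_option maxHeartbeats 1000000 in
lemma key (hn : 3 ≤ n) (u v : ZMod n ⊕ ZMod n) :
    Mm n u v - (if special v then 0 else Mm n u (anchor v)) = Tm n u v - RR n u v := by
  haveI : Fact (1 < n) := ⟨by omega⟩
  have h01 : (0 : ZMod n) ≠ 1 := zero_ne_one
  have h10 : (1 : ZMod n) ≠ 0 := h01.symm
  rcases u with i | i <;> rcases v with j | j
  · by_cases hj0 : j = 0
    · subst hj0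
      rw [if_pos ((special_inl 0).mpr (Or.inl rfl))]
      by_cases hi0 : i = 0
      · subst hi0; simp [Mm, Tm, RR, h10]
      · by_cases hi1 : i = 1
        · subst hi1; simp [Mm, Tm, RR, h10]; ring
        · simp [Mm, Tm, RR, hi0, hi1, h10]
    · by_cases hj1 : j = 1
      · subst hj1
        rw [if_pos ((special_inl 1).mpr (Or.inr rfl))]
        by_cases hi0 : i = 0
        · subst hi0; simp [Mm, Tm, RR, h01, h10]
        · by_cases hi1 : i = 1
          · subst hi1; simp [Mm, Tm, RR, h01, h10]
          · simp [Mm, Tm, RR, hi0, hi1, h01, h10]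
      · rw [if_neg (fun h => by rcases (special_inl j).mp h with h|h <;> tauto)]
        have hanch : anchor (Sum.inl j : ZMod n ⊕ ZMod n) = Sum.inl 1 := rfl
        rw [hanch]
        by_cases hi0 : i = 0
        · subst hi0; simp [Mm, Tm, RR, hj0, hj1, h01, h10, Ne.symm hj0, Ne.symm hj1]
        · by_cases hi1 : i = 1
          · subst hi1; simp [Mm, Tm, RR, hj0, hj1, h01, h10, Ne.symm hj1, hi0]
          · by_cases hij : i = j
            · subst hij; simp [Mm, Tm, RR, hj0, hj1, h01, h10]
            · simp [Mm, Tm, RR, hi0, hi1, hij, hj0, hj1, h01, h10]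
  · by_cases hj0 : j = 0
    · subst hj0
      rw [if_pos ((special_inr 0).mpr rfl)]
      by_cases hi0 : i = 0
      · subst hi0; simp [Mm, Tm, RR, h01, h10]
      · by_cases hi1 : i = 1
        · subst hi1; simp [Mm, Tm, RR, h01, h10]
        · simp [Mm, Tm, RR, hi0, hi1, h01, h10]
    · rw [if_neg (fun h => hj0 ((special_inr j).mp h))]
      have hanch : anchor (Sum.inr j : ZMod n ⊕ ZMod n) = Sum.inr 0 := rfl
      rw [hanch]
      by_cases hi0 : i = 0
      · subst hi0; simp [Mm, Tm, RR, hj0, h01, h10]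
      · by_cases hi1 : i = 1
        · subst hi1; simp [Mm, Tm, RR, hj0, h01, h10]
        · simp [Mm, Tm, RR, hi0, hi1, hj0, h01, h10]
  · by_cases hj0 : j = 0
    · subst hj0
      rw [if_pos ((special_inl 0).mpr (Or.inl rfl))]
      by_cases hi0 : i = 0
      · subst hi0; simp [Mm, Tm, RR, h01, h10]; ring
      · simp [Mm, Tm, RR, hi0, h01, h10]
    · by_cases hj1 : j = 1
      · subst hj1
        rw [if_pos ((special_inl 1).mpr (Or.inr rfl))]
        by_cases hi0 : i = 0
        · subst hi0; simp [Mm, Tm, RR, h01, h10]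
        · simp [Mm, Tm, RR, hi0, h01, h10]
      · rw [if_neg (fun h => by rcases (special_inl j).mp h with h|h <;> tauto)]
        have hanch : anchor (Sum.inl j : ZMod n ⊕ ZMod n) = Sum.inl 1 := rfl
        rw [hanch]
        by_cases hi0 : i = 0
        · subst hi0; simp [Mm, Tm, RR, hj0, hj1, h01, h10, Ne.symm hj1]
        · simp [Mm, Tm, RR, hi0, hj0, hj1, h01, h10, Ne.symm hj1]
  · by_cases hj0 : j = 0
    · subst hj0
      rw [if_pos ((special_inr 0).mpr rfl)]
      by_cases hi0 : i = 0
      · subst hi0; simp [Mm, Tm, RR, h01, h10]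
      · simp [Mm, Tm, RR, hi0, h01, h10]
    · rw [if_neg (fun h => hj0 ((special_inr j).mp h))]
      have hanch : anchor (Sum.inr j : ZMod n ⊕ ZMod n) = Sum.inr 0 := rfl
      rw [hanch]
      by_cases hi0 : i = 0
      · subst hi0; simp [Mm, Tm, RR, hj0, h01, h10]
      · simp [Mm, Tm, RR, hi0, hj0, h01, h10]


lemma charpoly_conj_aux {m R : Type*} [Fintype m] [DecidableEq m] [CommRing R]
    (P T Q : Matrix m m R) (hPQ : P * Q = 1) :
    (P * T * Q).charpoly = T.charpoly := by
  have hCm : (C : R →+* R[X]).mapMatrix P * (C : R →+* R[X]).mapMatrix Q = 1 := by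
    rw [← map_mul, hPQ, map_one]
  have hchar : Matrix.charmatrix (P * T * Q) =
      (C : R →+* R[X]).mapMatrix P * Matrix.charmatrix T * (C : R →+* R[X]).mapMatrix Q := by
    unfold Matrix.charmatrix
    rw [Matrix.mul_sub, Matrix.sub_mul]
    congr 1
    · have : (C : R →+* R[X]).mapMatrix P * Matrix.scalar m (X : R[X]) *
          (C : R →+* R[X]).mapMatrix Q = Matrix.scalar m (X : R[X]) := by
        rw [← (Matrix.scalar_commute (X : R[X]) (fun r' => Commute.all _ _) _).eq,
          Matrix.mul_assoc, hCm, Matrix.mul_one]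
      rw [this]
    · rw [map_mul, map_mul]
  rw [Matrix.charpoly, hchar, Matrix.det_mul, Matrix.det_mul]
  have hdet : ((C : R →+* R[X]).mapMatrix P).det * ((C : R →+* R[X]).mapMatrix Q).det = 1 := by
    rw [← Matrix.det_mul, hCm, Matrix.det_one]
  calc ((C : R →+* R[X]).mapMatrix P).det * (Matrix.charmatrix T).det *
        ((C : R →+* R[X]).mapMatrix Q).det
      = (Matrix.charmatrix T).det * (((C : R →+* R[X]).mapMatrix P).det *
        ((C : R →+* R[X]).mapMatrix Q).det) := by ring
    _ = T.charpoly := by rw [hdet, mul_one]; rfl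


def eSplit (n : ℕ) [NeZero n] : {v : ZMod n ⊕ ZMod n // ¬ special v} ≃
    {j : ZMod n // ¬(j = 0 ∨ j = 1)} ⊕ {j : ZMod n // ¬ j = 0} where
  toFun := fun v => match v with
    | ⟨.inl j, h⟩ => .inl ⟨j, fun hc => h ((special_inl j).mpr hc)⟩
    | ⟨.inr j, h⟩ => .inr ⟨j, fun hc => h ((special_inr j).mpr hc)⟩
  invFun := Sum.elim (fun j => ⟨.inl j.1, fun hs => j.2 ((special_inl _).mp hs)⟩)
    (fun j => ⟨.inr j.1, fun hs => j.2 ((special_inr _).mp hs)⟩)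
  left_inv := by rintro ⟨v | v, h⟩ <;> rfl
  right_inv := by rintro (⟨j, h⟩ | ⟨j, h⟩) <;> rfl

lemma Tm_eq_zero {u v : ZMod n ⊕ ZMod n} (hv : ¬ special v) (huv : u ≠ v) : Tm n u v = 0 := by
  have h0 : v ≠ .inl 0 := fun h => hv (Or.inl h)
  have h1 : v ≠ .inl 1 := fun h => hv (Or.inr (Or.inl h))
  have h2 : v ≠ .inr 0 := fun h => hv (Or.inr (Or.inr h))
  rw [Tm.eq_def]
  rw [if_neg h0, if_neg h1, if_neg h2]
  rcases v with j | j
  · simp [huv]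
  · rfl

def e3 (n : ℕ) [NeZero n] (hn : 3 ≤ n) : Fin 3 ≃ {v : ZMod n ⊕ ZMod n // special v} := by
  haveI : Fact (1 < n) := ⟨by omega⟩
  exact {
    toFun := ![⟨.inl 0, Or.inl rfl⟩, ⟨.inl 1, Or.inr (Or.inl rfl)⟩, ⟨.inr 0, Or.inr (Or.inr rfl)⟩]
    invFun := fun v => if v.1 = .inl 0 then 0 else if v.1 = .inl 1 then 1 else 2
    left_inv := by
      intro i
      fin_cases i
      · simp
      · simp [(zero_ne_one (α := ZMod n)).symm]
      · simp
    right_inv := by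
      rintro ⟨v, hv⟩
      rcases hv with h | h | h <;> subst h
      · simp
      · simp [(zero_ne_one (α := ZMod n)).symm]
      · simp }

lemma nonneg_b : (0:ℝ) ≤ (2*(n:ℝ)-1)^2 + ((n:ℝ)-1)^2 := by positivity
lemma nonneg_c : (0:ℝ) ≤ (2*(n:ℝ)-1)^2 + 1 := by positivity

set_option maxHeartbeats 1000000 in
lemma charpoly_Tm (hn : 3 ≤ n) :
    (Tm n).charpoly =
      (X + C (((n : ℝ) - 1) * rt2)) ^ (n - 2) * X ^ (n - 1) *
        (X ^ 2 * (X - C (((n : ℝ) - 1) * ((n : ℝ) - 2) * rt2)) -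
          C (((n : ℝ) - 1) * (5 * (n : ℝ) ^ 2 - 6 * (n : ℝ) + 2)) * X -
          C (2 * (n : ℝ) * (2 * (n : ℝ) ^ 2 - 2 * (n : ℝ) + 1)) *
            (X - C (((n : ℝ) - 1) * ((n : ℝ) - 2) * rt2))) := by
  haveI : Fact (1 < n) := ⟨by omega⟩
  have h01 : (0 : ZMod n) ≠ 1 := zero_ne_one
  rw [Matrix.charpoly,
    Matrix.twoBlockTriangular_det' _ special (by
      intro u hu v hv
      have huv : u ≠ v := fun h => hv (h ▸ hu)
      rw [Matrix.charmatrix_apply_ne _ _ _ huv, Tm_eq_zero hv huv, map_zero, neg_zero])]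
  -- nonspecial block is diagonal
  have hdiagblock : (Matrix.toSquareBlockProp (Matrix.charmatrix (Tm n)) fun v => ¬ special v)
      = Matrix.diagonal (fun v : {v : ZMod n ⊕ ZMod n // ¬ special v} =>
          (X : ℝ[X]) - C (Tm n v.1 v.1)) := by
    apply Matrix.ext
    rintro ⟨u, hu⟩ ⟨v, hv⟩
    by_cases huv : u = v
    · subst huv
      simp [Matrix.toSquareBlockProp, Matrix.diagonal]
    · have : (⟨u, hu⟩ : {v : ZMod n ⊕ ZMod n // ¬ special v}) ≠ ⟨v, hv⟩ := by
        simp [huv]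
      rw [Matrix.diagonal_apply_ne _ this]
      show Matrix.charmatrix (Tm n) u v = 0
      rw [Matrix.charmatrix_apply_ne _ _ _ huv, Tm_eq_zero hv huv, map_zero, neg_zero]
  rw [hdiagblock, Matrix.det_diagonal]
  -- compute the product
  have hprod : ∏ v : {v : ZMod n ⊕ ZMod n // ¬ special v}, ((X : ℝ[X]) - C (Tm n v.1 v.1))
      = (X + C (((n : ℝ) - 1) * rt2)) ^ (n - 2) * X ^ (n - 1) := by
    rw [← Equiv.prod_comp (eSplit n).symm (fun v => (X : ℝ[X]) - C (Tm n v.1 v.1)),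
      Fintype.prod_sum_type]
    have hL : ∀ j : {j : ZMod n // ¬(j = 0 ∨ j = 1)},
        (X : ℝ[X]) - C (Tm n ((eSplit n).symm (.inl j)).1 ((eSplit n).symm (.inl j)).1)
          = X + C (((n : ℝ) - 1) * rt2) := by
      rintro ⟨j, hj⟩
      have hj' := not_or.mp hj
      have hval : (((eSplit n).symm (Sum.inl ⟨j, hj⟩)).1 : ZMod n ⊕ ZMod n) = Sum.inl j := by rfl
      have hT : Tm n (.inl j) (.inl j) = -(aa n) := by
        rw [Tm.eq_def, if_neg (by simp [hj'.1]), if_neg (by simp [hj'.2]), if_neg (by simp)]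
        simp
      rw [hval, hT, map_neg, sub_neg_eq_add, aa, rt2]
    have hR : ∀ j : {j : ZMod n // ¬ j = 0},
        (X : ℝ[X]) - C (Tm n ((eSplit n).symm (.inr j)).1 ((eSplit n).symm (.inr j)).1) = X := by
      rintro ⟨j, hj⟩
      have hval : (((eSplit n).symm (Sum.inr ⟨j, hj⟩)).1 : ZMod n ⊕ ZMod n) = Sum.inr j := by rfl
      have hT : Tm n (.inr j) (.inr j) = 0 := by
        rw [Tm.eq_def, if_neg (by simp), if_neg (by simp), if_neg (by simp [hj])]
      rw [hval, hT, map_zero, sub_zero]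
    rw [Finset.prod_congr rfl (fun j _ => hL j), Finset.prod_congr rfl (fun j _ => hR j),
      Finset.prod_const, Finset.prod_const, Finset.card_univ, Finset.card_univ]
    congr 2
    · -- card = n - 2
      rw [Fintype.card_subtype_compl]
      have : Fintype.card {j : ZMod n // j = 0 ∨ j = 1} = 2 := by
        rw [Fintype.card_subtype]
        have : Finset.univ.filter (fun j : ZMod n => j = 0 ∨ j = 1) = {0, 1} := by
          ext k; simp
        rw [this, Finset.card_pair h01]
      rw [this, ZMod.card]
    · rw [Fintype.card_subtype_compl]
      have : Fintype.card {j : ZMod n // j = 0} = 1 := Fintype.card_subtype_eq 0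
      rw [this, ZMod.card]
  rw [hprod]
  -- special block
  have hdet3 : (Matrix.toSquareBlockProp (Matrix.charmatrix (Tm n)) special).det =
      (X ^ 2 * (X - C (((n : ℝ) - 1) * ((n : ℝ) - 2) * rt2)) -
          C (((n : ℝ) - 1) * (5 * (n : ℝ) ^ 2 - 6 * (n : ℝ) + 2)) * X -
          C (2 * (n : ℝ) * (2 * (n : ℝ) ^ 2 - 2 * (n : ℝ) + 1)) *
            (X - C (((n : ℝ) - 1) * ((n : ℝ) - 2) * rt2))) := by
    rw [← Matrix.det_submatrix_equiv_self (e3 n hn)]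
    rw [Matrix.det_fin_three]
    have E : ∀ i j : Fin 3,
        ((Matrix.toSquareBlockProp (Matrix.charmatrix (Tm n)) special).submatrix
          (e3 n hn) (e3 n hn)) i j
        = Matrix.charmatrix (Tm n) (e3 n hn i).1 (e3 n hn j).1 := fun i j => rfl
    simp only [E]
    have v0 : ((e3 n hn 0).1 : ZMod n ⊕ ZMod n) = .inl 0 := rfl
    have v1 : ((e3 n hn 1).1 : ZMod n ⊕ ZMod n) = .inl 1 := rfl
    have v2 : ((e3 n hn 2).1 : ZMod n ⊕ ZMod n) = .inr 0 := rfl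
    rw [v0, v1, v2]
    have ne01 : (Sum.inl 0 : ZMod n ⊕ ZMod n) ≠ .inl 1 := by simp [h01]
    have ne02 : (Sum.inl 0 : ZMod n ⊕ ZMod n) ≠ .inr 0 := by simp
    have ne12 : (Sum.inl 1 : ZMod n ⊕ ZMod n) ≠ .inr 0 := by simp
    rw [Matrix.charmatrix_apply_eq, Matrix.charmatrix_apply_eq, Matrix.charmatrix_apply_eq,
      Matrix.charmatrix_apply_ne _ _ _ ne01, Matrix.charmatrix_apply_ne _ _ _ ne02,
      Matrix.charmatrix_apply_ne _ _ _ ne12,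
      Matrix.charmatrix_apply_ne _ _ _ ne01.symm, Matrix.charmatrix_apply_ne _ _ _ ne02.symm,
      Matrix.charmatrix_apply_ne _ _ _ ne12.symm]
    have t00 : Tm n (.inl 0) (.inl 0) = 0 := by rw [Tm.eq_def]; simp
    have t01 : Tm n (.inl 0) (.inl 1) = bb n := by
      rw [Tm.eq_def]; simp [h01, h01.symm]
    have t02 : Tm n (.inl 0) (.inr 0) = cc n := by rw [Tm.eq_def]; simp
    have t10 : Tm n (.inl 1) (.inl 0) = ((n:ℝ)-1) * bb n := by
      rw [Tm.eq_def]; simp [h01, h01.symm]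
    have t11 : Tm n (.inl 1) (.inl 1) = ((n:ℝ)-2) * aa n := by
      rw [Tm.eq_def]; simp [h01, h01.symm]
    have t12 : Tm n (.inl 1) (.inr 0) = 0 := by
      rw [Tm.eq_def]; simp [h01, h01.symm]
    have t20 : Tm n (.inr 0) (.inl 0) = (n:ℝ) * cc n := by rw [Tm.eq_def]; simp
    have t21 : Tm n (.inr 0) (.inl 1) = 0 := by
      rw [Tm.eq_def]; simp [h01, h01.symm]
    have t22 : Tm n (.inr 0) (.inr 0) = 0 := by rw [Tm.eq_def]; simp
    rw [t00, t01, t02, t10, t11, t12, t20, t21, t22]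
    have hb2 : bb n * bb n = 5*(n:ℝ)^2 - 6*(n:ℝ) + 2 := by
      rw [bb, Real.mul_self_sqrt nonneg_b]; ring
    have hc2 : cc n * cc n = 4*(n:ℝ)^2 - 4*(n:ℝ) + 2 := by
      rw [cc, Real.mul_self_sqrt nonneg_c]; ring
    have haa : ((n:ℝ)-2) * aa n = ((n : ℝ) - 1) * ((n : ℝ) - 2) * rt2 := by
      rw [aa, rt2]; ring
    have eb : (C (((n : ℝ) - 1) * (5 * (n : ℝ) ^ 2 - 6 * (n : ℝ) + 2)) : ℝ[X])
        = C (bb n) * C (((n:ℝ)-1) * bb n) := by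
      rw [← C_mul]
      congr 1
      rw [← hb2]; ring
    have ec : (C (2 * (n : ℝ) * (2 * (n : ℝ) ^ 2 - 2 * (n : ℝ) + 1)) : ℝ[X])
        = C (cc n) * C ((n:ℝ) * cc n) := by
      rw [← C_mul]
      congr 1
      rw [show (2 * (n:ℝ) * (2 * (n : ℝ) ^ 2 - 2 * (n : ℝ) + 1)) = (n:ℝ) * (4*(n:ℝ)^2 - 4*(n:ℝ) + 2) by ring, ← hc2]
      ring
    rw [← haa, eb, ec, map_zero, neg_zero, map_mul, map_mul]
    ring
  rw [hdet3]
  ring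

end Aux

theorem stmt14 (n : ℕ) [NeZero n] (hn : 3 ≤ n) :
    somborCharpoly (enhancedPowerGraph (DihedralGroup n)) =
      (X + C (((n : ℝ) - 1) * rt2)) ^ (n - 2) * X ^ (n - 1) *
        (X ^ 2 * (X - C (((n : ℝ) - 1) * ((n : ℝ) - 2) * rt2)) -
          C (((n : ℝ) - 1) * (5 * (n : ℝ) ^ 2 - 6 * (n : ℝ) + 2)) * X -
          C (2 * (n : ℝ) * (2 * (n : ℝ) ^ 2 - 2 * (n : ℝ) + 1)) *
            (X - C (((n : ℝ) - 1) * ((n : ℝ) - 2) * rt2))) := by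
  have hPQ : (1 - Nm n) * (1 + Nm n) = 1 := by
    rw [Matrix.sub_mul, Matrix.one_mul, Matrix.mul_add, Matrix.mul_one, Nm_mul_Nm, add_zero,
      add_sub_cancel_right]
  have hMP : Mm n * (1 - Nm n) = (1 - Nm n) * Tm n := by
    ext u v
    rw [Matrix.mul_sub, Matrix.mul_one, Matrix.sub_apply, Matrix.sub_mul, Matrix.one_mul,
      Matrix.sub_apply, mul_Nm, Nm_mul_Tm hn]
    exact key hn u v
  have hMm : Mm n = (1 - Nm n) * Tm n * (1 + Nm n) := by
    calc Mm n = Mm n * ((1 - Nm n) * (1 + Nm n)) := by rw [hPQ, Matrix.mul_one]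
    _ = (Mm n * (1 - Nm n)) * (1 + Nm n) := by rw [Matrix.mul_assoc]
    _ = (1 - Nm n) * Tm n * (1 + Nm n) := by rw [hMP]
  have h1 : somborCharpoly (enhancedPowerGraph (DihedralGroup n)) = (Mm n).charpoly := by
    rw [somborCharpoly, ← Matrix.charpoly_reindex (dEquiv n).symm
      (somborMatrix (enhancedPowerGraph (DihedralGroup n))), sombor_eq hn]
  rw [h1, hMm, charpoly_conj_aux _ _ _ hPQ, charpoly_Tm hn]
end
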